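/- arXiv:1004.2134 — 5 statements merged into one kernel-verified Lean document; each statement's English description precedes it below -/
import Mathlib

section
/- Let A be an n×n real matrix such that every eigenvalue of the symmetric matrix A + Aᵀ is strictly negative, and let 2w = max of the eigenvalues of A + Aᵀ (so w < 0). Then every solution of z' = Az with z(0) = z₀ satisfies |z(t)| ≤ e^{wt}|z₀| for all t ≥ 0; in particular the system is exponentially stable. -/
open Matrix

lemma dot_symm {m : ℕ} (A : Matrix (Fin m) (Fin m) ℝ) (x : Fin m → ℝ) :
    x ⬝ᵥ ((A + Aᵀ) *ᵥ x) = 2 * (x ⬝ᵥ (A *ᵥ x)) := by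
  rw [Matrix.add_mulVec, dotProduct_add, Matrix.mulVec_transpose,
    dotProduct_comm x (x ᵥ* A), ← dotProduct_mulVec]
  ring

/-- Rayleigh-type bound for a real symmetric matrix. -/
lemma quad_bound {m : ℕ} (M : Matrix (Fin m) (Fin m) ℝ) (hM : M.IsHermitian)
    (c : ℝ) (hc : ∀ i, hM.eigenvalues i ≤ c) (x : Fin m → ℝ) :
    x ⬝ᵥ (M *ᵥ x) ≤ c * (x ⬝ᵥ x) := by
  classical
  have hUU : (hM.eigenvectorUnitary : Matrix (Fin m) (Fin m) ℝ)
      * star (hM.eigenvectorUnitary : Matrix (Fin m) (Fin m) ℝ) = 1 :=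
    Matrix.mem_unitaryGroup_iff.mp hM.eigenvectorUnitary.2
  set V : Matrix (Fin m) (Fin m) ℝ := (hM.eigenvectorUnitary : Matrix (Fin m) (Fin m) ℝ) with hV
  have hps : (c • (1 : Matrix (Fin m) (Fin m) ℝ) - M).PosSemidef := by
    have hD : (Matrix.diagonal (fun i => c - hM.eigenvalues i)).PosSemidef :=
      Matrix.PosSemidef.diagonal (fun i => sub_nonneg.mpr (hc i))
    have hdiag : Matrix.diagonal (fun i => c - hM.eigenvalues i)
        = c • (1 : Matrix (Fin m) (Fin m) ℝ)
          - Matrix.diagonal (RCLike.ofReal ∘ hM.eigenvalues) := by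
      ext i j
      by_cases h : i = j <;> simp [Matrix.diagonal, h, Matrix.one_apply]
    have h1 : c • (1 : Matrix (Fin m) (Fin m) ℝ) - M
        = V * (Matrix.diagonal (fun i => c - hM.eigenvalues i)) * star V := by
      calc c • (1 : Matrix (Fin m) (Fin m) ℝ) - M
          = V * (c • (1 : Matrix (Fin m) (Fin m) ℝ)) * star V
            - V * Matrix.diagonal (RCLike.ofReal ∘ hM.eigenvalues) * star V := by
            rw [Matrix.mul_smul, Matrix.mul_one, Matrix.smul_mul, hUU]
            conv_lhs => rw [hM.spectral_theorem]
            simp [Unitary.conjStarAlgAut_apply, hV]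
        _ = V * (Matrix.diagonal (fun i => c - hM.eigenvalues i)) * star V := by
            rw [hdiag, Matrix.mul_sub, Matrix.sub_mul]
    rw [h1, Matrix.star_eq_conjTranspose]
    exact hD.mul_mul_conjTranspose_same V
  have h2 := hps.dotProduct_mulVec_nonneg x
  simp only [star_trivial, Matrix.sub_mulVec, Matrix.smul_mulVec, Matrix.one_mulVec,
    dotProduct_sub, dotProduct_smul, smul_eq_mul] at h2
  linarith

/-- Exponential stability of `z' = Az` when all eigenvalues of the symmetric
matrix `A + Aᵀ` are negative, with `2w` the largest such eigenvalue. -/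
theorem exp_stability_symmetric_part (n : ℕ) (A : Matrix (Fin n) (Fin n) ℝ)
    (hsym : (A + A.transpose).IsHermitian)
    (hneg : ∀ i, hsym.eigenvalues i < 0)
    (w : ℝ) (hw : IsGreatest (Set.range hsym.eigenvalues) (2 * w))
    (z₀ : Fin n → ℝ) (z : ℝ → (Fin n → ℝ))
    (hz : ∀ t : ℝ, HasDerivAt z (A.mulVec (z t)) t) (hz0 : z 0 = z₀) :
    w < 0 ∧ ∀ t : ℝ, 0 ≤ t →
      Real.sqrt (∑ i, (z t i) ^ 2) ≤ Real.exp (w * t) * Real.sqrt (∑ i, (z₀ i) ^ 2) := by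
  classical
  have hwneg : w < 0 := by
    obtain ⟨i, hi⟩ := hw.1
    have := hneg i
    rw [hi] at this
    linarith
  refine ⟨hwneg, fun t ht => ?_⟩
  set M := A + A.transpose with hM
  set g : ℝ → ℝ := fun t => ∑ i, (z t i) ^ 2 with hgdef
  -- derivative of g
  have hg : ∀ s : ℝ, HasDerivAt g (z s ⬝ᵥ (M *ᵥ z s)) s := by
    intro s
    have hcomp : ∀ i, HasDerivAt (fun u => z u i) (A.mulVec (z s) i) s := fun i =>
      hasDerivAt_pi.mp (hz s) i
    have hsum : HasDerivAt g (∑ i, (2 : ℕ) * z s i ^ 1 * A.mulVec (z s) i) s :=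
      HasDerivAt.fun_sum (fun i _ => (hcomp i).pow 2)
    convert hsum using 1
    have hMz : z s ⬝ᵥ (M *ᵥ z s) = 2 * (z s ⬝ᵥ (A *ᵥ z s)) := by
      rw [hM]; exact dot_symm A (z s)
    rw [hMz, dotProduct, Finset.mul_sum]
    apply Finset.sum_congr rfl
    intro i _
    push_cast
    ring
  -- g' ≤ 2w g
  have hkey : ∀ s : ℝ, z s ⬝ᵥ (M *ᵥ z s) ≤ 2 * w * g s := by
    intro s
    have := quad_bound M hsym (2 * w) (fun i => hw.2 ⟨i, rfl⟩) (z s)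
    have hgg : z s ⬝ᵥ z s = g s := by
      simp [hgdef, dotProduct, sq]
    rwa [hgg] at this
  -- the auxiliary function
  set h : ℝ → ℝ := fun s => g s * Real.exp (-(2 * w) * s) with hhdef
  have hh : ∀ s : ℝ, HasDerivAt h
      ((z s ⬝ᵥ (M *ᵥ z s)) * Real.exp (-(2 * w) * s)
        + g s * (-(2 * w) * Real.exp (-(2 * w) * s))) s := by
    intro s
    have he : HasDerivAt (fun u => Real.exp (-(2 * w) * u))
        (Real.exp (-(2 * w) * s) * (-(2 * w))) s := by
      simpa using ((hasDerivAt_id s).const_mul (-(2 * w))).exp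
    have hh' := (hg s).fun_mul he
    rw [hhdef]
    convert hh' using 1
    all_goals first | rfl | ring
  have hanti : Antitone h := by
    apply antitone_of_deriv_nonpos
    · exact fun s => (hh s).differentiableAt
    · intro s
      rw [(hh s).deriv]
      have hexp : 0 < Real.exp (-(2 * w) * s) := Real.exp_pos _
      nlinarith [hkey s]
  have hth : h t ≤ h 0 := hanti ht
  have hg0 : g 0 = ∑ i, (z₀ i) ^ 2 := by simp [hgdef, hz0]
  have hgt : g t ≤ Real.exp (2 * w * t) * ∑ i, (z₀ i) ^ 2 := by
    have h0 : h 0 = ∑ i, (z₀ i) ^ 2 := by simp [hhdef, hg0]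
    rw [h0] at hth
    have h1 := mul_le_mul_of_nonneg_right hth (Real.exp_pos (2 * w * t)).le
    have h2 : Real.exp (-(2 * w) * t) * Real.exp (2 * w * t) = 1 := by
      rw [← Real.exp_add, show -(2 * w) * t + 2 * w * t = 0 by ring, Real.exp_zero]
    have h3 : g t * Real.exp (-(2 * w) * t) * Real.exp (2 * w * t) = g t := by
      rw [mul_assoc, h2, mul_one]
    rw [hhdef] at h1
    simp only at h1
    rw [h3] at h1
    linarith [h1]
  calc Real.sqrt (∑ i, (z t i) ^ 2) ≤ Real.sqrt (Real.exp (2 * w * t) * ∑ i, (z₀ i) ^ 2) :=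
        Real.sqrt_le_sqrt hgt
    _ = Real.exp (w * t) * Real.sqrt (∑ i, (z₀ i) ^ 2) := by
        rw [Real.sqrt_mul (Real.exp_pos _).le]
        congr 1
        rw [show (2 : ℝ) * w * t = w * t + w * t by ring, Real.exp_add,
          ← Real.sqrt_mul_self (Real.exp_pos (w * t)).le]
        rw [Real.sqrt_mul_self (Real.sqrt_nonneg _)]
end

section
/- Let A be an n×n real matrix with ‖e^{At}‖ ≤ M e^{−wt} for all t ≥ 0, where M, w > 0, and let f : Ω → ℝⁿ be locally Lipschitz on an open set Ω ∋ 0 with |f(y)| ≤ L|y| for all y ∈ Ω. If LM − w < 0, then there exists ρ > 0 such that every solution y(·, λ) of y' = Ay + f(y) with y(0) = λ ∈ B(0,ρ) is defined on [0,∞) and satisfies lim_{t→∞} y(t,λ) = 0; moreover |y(t,λ)| ≤ M|λ| e^{(LM−w)t}. -/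
open Set intervalIntegral MeasureTheory Filter Topology

/-- Integral form of Grönwall's inequality. -/
lemma pl_gronwall_integral {u : ℝ → ℝ} {a Kc T : ℝ} (ha : 0 ≤ a) (hK : 0 ≤ Kc)
    (hu : ContinuousOn u (Icc 0 T)) (hu0 : ∀ t ∈ Icc 0 T, 0 ≤ u t)
    (hle : ∀ t ∈ Icc 0 T, u t ≤ a + Kc * ∫ s in (0:ℝ)..t, u s) :
    ∀ t ∈ Icc 0 T, u t ≤ a * Real.exp (Kc * t) := by
  set G : ℝ → ℝ := fun t => ∫ s in (0:ℝ)..t, u s with hGdef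
  have hint : ∀ t ∈ Icc (0:ℝ) T, IntervalIntegrable u MeasureTheory.volume 0 t := by
    intro t ht
    exact (hu.mono (by rw [uIcc_of_le ht.1]; exact Icc_subset_Icc le_rfl ht.2)).intervalIntegrable
  have hG : ∀ t ∈ Icc (0:ℝ) T, HasDerivWithinAt G (u t) (Icc 0 T) t := by
    intro t ht
    haveI : Fact (t ∈ Icc (0:ℝ) T) := ⟨ht⟩
    exact intervalIntegral.integral_hasDerivWithinAt_right (hint t ht)
      (hu.stronglyMeasurableAtFilter_nhdsWithin measurableSet_Icc t) (hu t ht)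
  have hGcont : ContinuousOn G (Icc 0 T) := fun t ht => (hG t ht).continuousWithinAt
  have hGnonneg : ∀ t ∈ Icc (0:ℝ) T, 0 ≤ G t := by
    intro t ht
    apply intervalIntegral.integral_nonneg ht.1
    intro s hs; exact hu0 s ⟨hs.1, hs.2.trans ht.2⟩
  have key := norm_le_gronwallBound_of_norm_deriv_right_le (f := G) (f' := u)
    (δ := 0) (K := Kc) (ε := a) (a := 0) (b := T) hGcont ?_ (by simp [hGdef]) ?_
  · intro t ht
    have h1 := hle t ht
    have h2 : ‖G t‖ ≤ gronwallBound 0 Kc a (t - 0) := key t ht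
    rw [Real.norm_eq_abs, abs_of_nonneg (hGnonneg t ht), sub_zero] at h2
    rcases eq_or_ne Kc 0 with h | h
    · subst h; simpa using h1.trans (by nlinarith [hGnonneg t ht])
    · rw [gronwallBound_of_K_ne_0 h] at h2
      have hexp : 0 < Real.exp (Kc * t) := Real.exp_pos _
      calc u t ≤ a + Kc * G t := h1
        _ ≤ a + Kc * (0 * Real.exp (Kc * t) + a / Kc * (Real.exp (Kc * t) - 1)) := by
            have := (mul_le_mul_of_nonneg_left h2 hK); linarith
        _ = a * Real.exp (Kc * t) := by field_simp; ring
  · intro t ht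
    have h := (hG t ⟨ht.1, ht.2.le⟩).mono (Icc_subset_Icc ht.1 le_rfl)
    exact h.mono_of_mem_nhdsWithin (by
      rw [mem_nhdsWithin_iff_exists_mem_nhds_inter]
      exact ⟨Iio T, Iio_mem_nhds ht.2, fun s hs => ⟨hs.2, hs.1.le⟩⟩)
  · intro t ht
    have := hle t ⟨ht.1, ht.2.le⟩
    rw [Real.norm_eq_abs, abs_of_nonneg (hu0 t ⟨ht.1, ht.2.le⟩)]
    calc u t ≤ a + Kc * G t := this
      _ ≤ Kc * ‖G t‖ + a := by
          rw [Real.norm_eq_abs, abs_of_nonneg (hGnonneg t ⟨ht.1, ht.2.le⟩)]; linarith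

/-- Variation-of-constants estimate for `y' = Ay + q(t)` with `‖q t‖ ≤ L ‖y t‖`. -/
lemma pl_voc_estimate {n : ℕ} (A : Matrix (Fin n) (Fin n) ℝ) {M w L : ℝ} (hM : 0 < M) (hL : 0 ≤ L)
    (hA : ∀ t : ℝ, 0 ≤ t → ∀ v : Fin n → ℝ,
      ‖(NormedSpace.exp (t • A)).mulVec v‖ ≤ M * Real.exp (-w * t) * ‖v‖)
    {y q : ℝ → (Fin n → ℝ)} {T : ℝ}
    (hy : ∀ t ∈ Icc (0:ℝ) T, HasDerivWithinAt y (A.mulVec (y t) + q t) (Icc 0 T) t)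
    (hq : ContinuousOn q (Icc 0 T))
    (hqle : ∀ t ∈ Icc (0:ℝ) T, ‖q t‖ ≤ L * ‖y t‖) :
    ∀ t ∈ Icc (0:ℝ) T, ‖y t‖ ≤ M * ‖y 0‖ * Real.exp ((L * M - w) * t) := by
  letI : SeminormedRing (Matrix (Fin n) (Fin n) ℝ) := Matrix.linftyOpSemiNormedRing
  letI : NormedRing (Matrix (Fin n) (Fin n) ℝ) := Matrix.linftyOpNormedRing
  letI : NormedAlgebra ℝ (Matrix (Fin n) (Fin n) ℝ) := Matrix.linftyOpNormedAlgebra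
  obtain ⟨Φ, hΦ⟩ : ∃ Φ : Matrix (Fin n) (Fin n) ℝ →L[ℝ] ((Fin n → ℝ) →L[ℝ] (Fin n → ℝ)),
      ∀ m v, Φ m v = m.mulVec v := by
    refine ⟨LinearMap.toContinuousLinearMap
      (((LinearMap.toContinuousLinearMap :
        ((Fin n → ℝ) →ₗ[ℝ] (Fin n → ℝ)) ≃ₗ[ℝ] ((Fin n → ℝ) →L[ℝ] (Fin n → ℝ))).toLinearMap).comp
        (Matrix.toLin' : Matrix (Fin n) (Fin n) ℝ ≃ₗ[ℝ] _).toLinearMap), fun m v => ?_⟩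
    simp [Matrix.toLin'_apply]
  set B := -A with hB
  have hderexp : ∀ C : Matrix (Fin n) (Fin n) ℝ, ∀ t : ℝ,
      HasDerivAt (fun u : ℝ => Φ (NormedSpace.exp (u • C))) (Φ (NormedSpace.exp (t • C) * C)) t :=
    fun C t => Φ.hasFDerivAt.comp_hasDerivAt t (hasDerivAt_exp_smul_const (𝕂 := ℝ) C t)
  have hcontexp : ∀ C : Matrix (Fin n) (Fin n) ℝ,
      Continuous fun u : ℝ => Φ (NormedSpace.exp (u • C)) :=
    fun C => continuous_iff_continuousAt.2 fun t => (hderexp C t).continuousAt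
  have hycont : ContinuousOn y (Icc 0 T) := fun t ht => (hy t ht).continuousWithinAt
  set z : ℝ → (Fin n → ℝ) := fun t => Φ (NormedSpace.exp (t • B)) (y t) with hzdef
  have hz : ∀ t ∈ Icc (0:ℝ) T,
      HasDerivWithinAt z (Φ (NormedSpace.exp (t • B)) (q t)) (Icc 0 T) t := by
    intro t ht
    have h1 := HasDerivWithinAt.clm_apply ((hderexp B t).hasDerivWithinAt) (hy t ht)
    refine h1.congr_deriv ?_
    rw [hΦ, hΦ, hΦ, Matrix.mulVec_add, ← Matrix.mulVec_mulVec, hB, Matrix.neg_mulVec,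
      Matrix.mulVec_neg]
    abel
  have hzcont : ContinuousOn z (Icc 0 T) := fun t ht => (hz t ht).continuousWithinAt
  have hintcont : ContinuousOn (fun s : ℝ => Φ (NormedSpace.exp (s • B)) (q s)) (Icc 0 T) :=
    ContinuousOn.clm_apply ((hcontexp B).continuousOn) hq
  have hftc : ∀ t ∈ Icc (0:ℝ) T,
      z t = y 0 + ∫ s in (0:ℝ)..t, Φ (NormedSpace.exp (s • B)) (q s) := by
    intro t ht
    have hz0 : z 0 = y 0 := by
      simp [hzdef, zero_smul, NormedSpace.exp_zero, hΦ, Matrix.one_mulVec]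
    have := intervalIntegral.integral_eq_sub_of_hasDeriv_right_of_le ht.1
      (hzcont.mono (Icc_subset_Icc le_rfl ht.2))
      (fun s hs => by
        refine (hz s ⟨hs.1.le, hs.2.le.trans ht.2⟩).mono_of_mem_nhdsWithin ?_
        rw [mem_nhdsWithin_iff_exists_mem_nhds_inter]
        exact ⟨Iio T, Iio_mem_nhds (lt_of_lt_of_le hs.2 ht.2),
          fun x hx => ⟨(hs.1.trans hx.2).le, hx.1.le⟩⟩)
      ((hintcont.mono (by rw [uIcc_of_le ht.1]; exact Icc_subset_Icc le_rfl ht.2)).intervalIntegrable)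
    rw [this, hz0]; abel
  have hrepr : ∀ t ∈ Icc (0:ℝ) T,
      y t = (NormedSpace.exp (t • A)).mulVec (y 0)
        + ∫ s in (0:ℝ)..t, (NormedSpace.exp ((t - s) • A)).mulVec (q s) := by
    intro t ht
    have hyz : y t = Φ (NormedSpace.exp (t • A)) (z t) := by
      rw [hzdef]
      show y t = Φ _ (Φ _ (y t))
      rw [hΦ, hΦ, Matrix.mulVec_mulVec, ← Matrix.exp_add_of_commute _ _
        (((Commute.refl A).neg_right).smul_left t |>.smul_right t)]
      have : t • A + t • B = 0 := by rw [hB, smul_neg, add_neg_cancel]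
      rw [this, NormedSpace.exp_zero, Matrix.one_mulVec]
    rw [hyz, hftc t ht, map_add, hΦ]
    congr 1
    rw [← ContinuousLinearMap.intervalIntegral_comp_comm _
      ((hintcont.mono (by rw [uIcc_of_le ht.1]; exact Icc_subset_Icc le_rfl ht.2)).intervalIntegrable)]
    refine intervalIntegral.integral_congr fun s hs => ?_
    have hc : Commute (t • A) (s • B) := by
      rw [hB]; exact (((Commute.refl A).neg_right).smul_right s).smul_left t
    rw [hΦ, hΦ, Matrix.mulVec_mulVec, ← Matrix.exp_add_of_commute _ _ hc]
    congr 2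
    rw [hB, smul_neg, sub_smul]
    abel
  set u : ℝ → ℝ := fun s => Real.exp (w * s) * ‖y s‖ with hudef
  have hucont : ContinuousOn u (Icc 0 T) :=
    (Real.continuous_exp.comp (continuous_const.mul continuous_id)).continuousOn.mul
      (hycont.norm)
  have hu0 : ∀ t ∈ Icc (0:ℝ) T, 0 ≤ u t := fun t _ =>
    mul_nonneg (Real.exp_pos _).le (norm_nonneg _)
  have hkey : ∀ t ∈ Icc (0:ℝ) T, u t ≤ M * ‖y 0‖ + (L * M) * ∫ s in (0:ℝ)..t, u s := by
    intro t ht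
    have hbound : ∀ s ∈ Icc (0:ℝ) t, ‖(NormedSpace.exp ((t - s) • A)).mulVec (q s)‖
        ≤ M * Real.exp (-w * (t - s)) * (L * ‖y s‖) := by
      intro s hs
      have h1 := hA (t - s) (by linarith [hs.2]) (q s)
      refine h1.trans ?_
      have := hqle s ⟨hs.1, hs.2.trans ht.2⟩
      have hpos : (0:ℝ) < M * Real.exp (-w * (t - s)) :=
        mul_pos hM (Real.exp_pos _)
      nlinarith [norm_nonneg (q s), Real.exp_pos (-w * (t-s))]
    have hicont : ContinuousOn (fun s : ℝ => (NormedSpace.exp ((t - s) • A)).mulVec (q s)) (Icc 0 t) := by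
      have : ContinuousOn (fun s : ℝ => Φ (NormedSpace.exp ((t - s) • A)) (q s)) (Icc 0 t) := by
        refine ContinuousOn.clm_apply ?_ (hq.mono (Icc_subset_Icc le_rfl ht.2))
        exact ((hcontexp A).comp (continuous_const.sub continuous_id)).continuousOn
      refine this.congr fun s _ => ?_
      exact (hΦ _ _).symm
    have hgcont : ContinuousOn (fun s : ℝ => M * Real.exp (-w * (t - s)) * (L * ‖y s‖)) (Icc 0 t) := by
      refine (continuous_const.mul ((Real.continuous_exp.comp
        (continuous_const.mul (continuous_const.sub continuous_id))))).continuousOn.mul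
        (continuousOn_const.mul ((hycont.mono (Icc_subset_Icc le_rfl ht.2)).norm))
    have hnorm : ‖∫ s in (0:ℝ)..t, (NormedSpace.exp ((t - s) • A)).mulVec (q s)‖
        ≤ ∫ s in (0:ℝ)..t, M * Real.exp (-w * (t - s)) * (L * ‖y s‖) := by
      have h1 := intervalIntegral.norm_integral_le_of_norm_le
        (μ := MeasureTheory.volume) (f := fun s => (NormedSpace.exp ((t - s) • A)).mulVec (q s))
        (g := fun s => M * Real.exp (-w * (t - s)) * (L * ‖y s‖)) (a := 0) (b := t)
        ht.1 ?_ ((hgcont.mono (by rw [uIcc_of_le ht.1])).intervalIntegrable)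
      · exact h1
      · refine Filter.Eventually.of_forall fun s hs => ?_
        exact hbound s ⟨hs.1.le, hs.2⟩
    have h2 : ‖y t‖ ≤ M * Real.exp (-w * t) * ‖y 0‖
        + ∫ s in (0:ℝ)..t, M * Real.exp (-w * (t - s)) * (L * ‖y s‖) := by
      rw [hrepr t ht]
      exact (norm_add_le _ _).trans (add_le_add (hA t ht.1 (y 0)) hnorm)
    have hexp_pos : (0:ℝ) < Real.exp (w * t) := Real.exp_pos _
    have h3 : u t ≤ M * ‖y 0‖
        + Real.exp (w * t) * ∫ s in (0:ℝ)..t, M * Real.exp (-w * (t - s)) * (L * ‖y s‖) := by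
      rw [hudef]
      have := mul_le_mul_of_nonneg_left h2 hexp_pos.le
      calc Real.exp (w * t) * ‖y t‖
          ≤ Real.exp (w * t) * (M * Real.exp (-w * t) * ‖y 0‖)
            + Real.exp (w * t) * ∫ s in (0:ℝ)..t, M * Real.exp (-w * (t - s)) * (L * ‖y s‖) := by
            rw [← mul_add]; exact this
        _ = M * ‖y 0‖ + Real.exp (w * t) * ∫ s in (0:ℝ)..t, M * Real.exp (-w * (t - s)) * (L * ‖y s‖) := by
            congr 1
            rw [show Real.exp (w * t) * (M * Real.exp (-w * t) * ‖y 0‖)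
              = (Real.exp (w * t) * Real.exp (-w * t)) * (M * ‖y 0‖) by ring,
              ← Real.exp_add]
            simp
    refine h3.trans ?_
    have h4 : Real.exp (w * t) * ∫ s in (0:ℝ)..t, M * Real.exp (-w * (t - s)) * (L * ‖y s‖)
        = (L * M) * ∫ s in (0:ℝ)..t, u s := by
      rw [← intervalIntegral.integral_const_mul, ← intervalIntegral.integral_const_mul]
      refine intervalIntegral.integral_congr fun s hs => ?_
      rw [hudef]
      show Real.exp (w * t) * (M * Real.exp (-w * (t - s)) * (L * ‖y s‖))
        = L * M * (Real.exp (w * s) * ‖y s‖)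
      rw [show Real.exp (w * t) * (M * Real.exp (-w * (t - s)) * (L * ‖y s‖))
        = (Real.exp (w * t) * Real.exp (-w * (t - s))) * (M * L * ‖y s‖) by ring, ← Real.exp_add]
      ring_nf
    rw [h4]
  have hgron := pl_gronwall_integral (a := M * ‖y 0‖) (Kc := L * M) (T := T)
    (mul_nonneg hM.le (norm_nonneg _)) (mul_nonneg hL hM.le) hucont hu0 hkey
  intro t ht
  have := hgron t ht
  rw [hudef] at this
  have hexp_pos : (0:ℝ) < Real.exp (w * t) := Real.exp_pos _
  have h5 : ‖y t‖ ≤ M * ‖y 0‖ * Real.exp (L * M * t) / Real.exp (w * t) := by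
    rw [le_div_iff₀ hexp_pos]
    calc ‖y t‖ * Real.exp (w * t) = Real.exp (w * t) * ‖y t‖ := by ring
      _ ≤ M * ‖y 0‖ * Real.exp (L * M * t) := this
  refine h5.trans (le_of_eq ?_)
  rw [div_eq_iff hexp_pos.ne', mul_assoc (M * ‖y 0‖), ← Real.exp_add]
  ring_nf

/-- Global existence on `[0, ∞)` for a bounded, globally Lipschitz autonomous vector field. -/
lemma pl_global_existence {E : Type*} [NormedAddCommGroup E] [NormedSpace ℝ E] [CompleteSpace E]
    {F : E → E} {K' : NNReal} (hlip : LipschitzWith K' F) {C : ℝ} (hC : 0 < C)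
    (hFb : ∀ x, ‖F x‖ ≤ C) (lam : E) :
    ∃ y : ℝ → E, y 0 = lam ∧ ∀ t ∈ Ici (0:ℝ), HasDerivWithinAt y (F (y t)) (Ici 0) t := by
  have step : ∀ (k : ℕ) (x₀ : E), ∃ z : ℝ → E, z k = x₀ ∧
      ∀ t ∈ Icc (k:ℝ) ((k:ℝ)+1), HasDerivWithinAt z (F (z t)) (Icc (k:ℝ) ((k:ℝ)+1)) t := by
    intro k x₀
    have hpl : IsPicardLindelof (fun (_ : ℝ) (x : E) => F x) (tmin := (k:ℝ)) (tmax := (k:ℝ)+1)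
        ⟨(k:ℝ), le_refl _, by linarith⟩ x₀ ⟨C, hC.le⟩ 0 ⟨C, hC.le⟩ K' :=
      IsPicardLindelof.of_time_independent (fun x _ => hFb x) hlip.lipschitzOnWith (by
        show C * max ((k:ℝ) + 1 - k) ((k:ℝ) - k) ≤ C - 0
        norm_num)
    exact hpl.exists_eq_forall_mem_Icc_hasDerivWithinAt₀
  choose Z hZ0 hZode using step
  set x : ℕ → E := fun k => Nat.rec lam (fun j xj => Z j xj ((j:ℝ)+1)) k with hx
  set z : ℕ → ℝ → E := fun k => Z k (x k) with hz
  have hzk : ∀ k : ℕ, z k k = x k := fun k => hZ0 k (x k)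
  have hzk1 : ∀ k : ℕ, z k ((k:ℝ)+1) = x (k+1) := fun k => rfl
  set y : ℝ → E := fun t => z (Nat.floor t) t with hy
  have agree : ∀ k : ℕ, ∀ t ∈ Icc (k:ℝ) ((k:ℝ)+1), y t = z k t := by
    intro k t ht
    have h0 : (0:ℝ) ≤ t := le_trans (Nat.cast_nonneg k) ht.1
    rcases eq_or_lt_of_le ht.2 with h | h
    · have hc : ((k:ℝ)+1) = ((k+1:ℕ):ℝ) := by push_cast; ring
      show z ⌊t⌋₊ t = z k t
      rw [h, hc, Nat.floor_natCast, hzk (k+1), ← hc, hzk1 k]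
    · have hfl : Nat.floor t = k := by
        rw [Nat.floor_eq_iff h0]
        exact ⟨ht.1, by push_cast; linarith⟩
      show z (Nat.floor t) t = z k t
      rw [hfl]
  have hy0 : y 0 = lam := by
    show z (Nat.floor (0:ℝ)) 0 = lam
    rw [Nat.floor_zero]
    have := hzk 0
    simpa [hx] using this
  refine ⟨y, hy0, ?_⟩
  have base : ∀ k : ℕ, ∀ t ∈ Icc (k:ℝ) ((k:ℝ)+1),
      HasDerivWithinAt y (F (y t)) (Icc (k:ℝ) ((k:ℝ)+1)) t := by
    intro k t ht
    have h1 := hZode k (x k) t ht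
    have h2 : HasDerivWithinAt y (F (z k t)) (Icc (k:ℝ) ((k:ℝ)+1)) t :=
      h1.congr (fun s hs => agree k s hs) (agree k t ht)
    rwa [← agree k t ht] at h2
  intro t ht
  set k := Nat.floor t with hk
  have hkle : (k:ℝ) ≤ t := Nat.floor_le ht
  have hklt : t < (k:ℝ) + 1 := by exact_mod_cast Nat.lt_floor_add_one t
  rcases eq_or_lt_of_le hkle with heq | hlt
  · rcases Nat.eq_zero_or_pos k with hk0 | hkpos
    · have heq0 : t = 0 := by rw [hk0] at heq; simpa using heq.symm
      have b := base 0 t (by rw [heq0]; constructor <;> norm_num)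
      norm_num at b
      refine b.mono_of_mem_nhdsWithin ?_
      rw [mem_nhdsWithin_iff_exists_mem_nhds_inter, heq0]
      exact ⟨Iio 1, Iio_mem_nhds one_pos, fun s hs => ⟨hs.2, hs.1.le⟩⟩
    · obtain ⟨m, hm⟩ := Nat.exists_eq_succ_of_ne_zero hkpos.ne'
      have ht_eq : t = (m:ℝ) + 1 := by rw [hm] at heq; push_cast at heq; linarith
      have h1 := base m t ⟨by linarith, by linarith⟩
      have h2 := base (m+1) t (by push_cast; exact ⟨by linarith, by linarith⟩)
      rw [show ((m+1:ℕ):ℝ) = (m:ℝ)+1 by push_cast; ring] at h2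
      have h3 := h1.union h2
      refine h3.mono_of_mem_nhdsWithin ?_
      rw [mem_nhdsWithin_iff_exists_mem_nhds_inter]
      refine ⟨Ioo ((m:ℝ)) ((m:ℝ)+2), Ioo_mem_nhds (by linarith) (by linarith), fun s hs => ?_⟩
      rcases le_or_gt s ((m:ℝ)+1) with hc | hc
      · exact Or.inl ⟨hs.1.1.le, hc⟩
      · exact Or.inr ⟨hc.le, by linarith [hs.1.2]⟩
  · refine (base k t ⟨hkle, hklt.le⟩).mono_of_mem_nhdsWithin ?_
    exact mem_nhdsWithin_of_mem_nhds (Icc_mem_nhds hlt hklt)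

section Radial

variable {E : Type*} [NormedAddCommGroup E] [NormedSpace ℝ E]

lemma pl_radial_aux {r : ℝ} (hr : 0 < r) {v u : E} (hv : ‖v‖ ≤ r) (hu : r < ‖u‖) :
    ‖v - (r * ‖u‖⁻¹) • u‖ ≤ 2 * ‖v - u‖ := by
  have hu0 : (0:ℝ) < ‖u‖ := hr.trans hu
  have h1 : ‖u - (r * ‖u‖⁻¹) • u‖ = ‖u‖ - r := by
    have he : u - (r * ‖u‖⁻¹) • u = (1 - r * ‖u‖⁻¹) • u := by
      rw [sub_smul, one_smul]
    rw [he, norm_smul, Real.norm_eq_abs, abs_of_nonneg, sub_mul, one_mul, mul_assoc,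
      inv_mul_cancel₀ hu0.ne', mul_one]
    have : r * ‖u‖⁻¹ ≤ 1 := by
      rw [← div_eq_mul_inv, div_le_one hu0]; exact hu.le
    linarith
  have h2 : ‖v - (r * ‖u‖⁻¹) • u‖ ≤ ‖v - u‖ + ‖u - (r * ‖u‖⁻¹) • u‖ := by
    have := norm_sub_le_norm_sub_add_norm_sub v u ((r * ‖u‖⁻¹) • u)
    exact this
  have h3 : ‖u‖ - ‖v‖ ≤ ‖v - u‖ := by
    have := norm_sub_norm_le u v
    rw [norm_sub_rev u v] at this
    linarith
  linarith [h2, h1, h3, hv]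

lemma pl_radial_aux2 {r : ℝ} (hr : 0 < r) {v u : E} (hv : r < ‖v‖) (hu : r < ‖u‖) :
    ‖(r * ‖v‖⁻¹) • v - (r * ‖u‖⁻¹) • u‖ ≤ 2 * ‖v - u‖ := by
  have hv0 : (0:ℝ) < ‖v‖ := hr.trans hv
  have hu0 : (0:ℝ) < ‖u‖ := hr.trans hu
  have t1 : ‖(r * ‖v‖⁻¹) • v - (r * ‖v‖⁻¹) • u‖ ≤ ‖v - u‖ := by
    rw [← smul_sub, norm_smul, Real.norm_eq_abs, abs_of_nonneg (by positivity)]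
    have : r * ‖v‖⁻¹ ≤ 1 := by
      rw [← div_eq_mul_inv, div_le_one hv0]; exact hv.le
    nlinarith [norm_nonneg (v - u)]
  have t2 : ‖(r * ‖v‖⁻¹) • u - (r * ‖u‖⁻¹) • u‖ ≤ ‖v - u‖ := by
    rw [← sub_smul, norm_smul, Real.norm_eq_abs]
    have habs : |r * ‖v‖⁻¹ - r * ‖u‖⁻¹| = r * |‖u‖ - ‖v‖| * (‖v‖⁻¹ * ‖u‖⁻¹) := by
      rw [show r * ‖v‖⁻¹ - r * ‖u‖⁻¹ = r * (‖u‖ - ‖v‖) * (‖v‖⁻¹ * ‖u‖⁻¹) by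
        field_simp]
      rw [abs_mul, abs_mul, abs_of_pos hr, abs_of_pos (by positivity : (0:ℝ) < ‖v‖⁻¹ * ‖u‖⁻¹)]
    rw [habs]
    have hda : |‖u‖ - ‖v‖| ≤ ‖v - u‖ := by
      rw [abs_sub_comm]
      exact abs_norm_sub_norm_le v u
    have hru : r * ‖v‖⁻¹ ≤ 1 := by
      rw [← div_eq_mul_inv, div_le_one hv0]; exact hv.le
    calc r * |‖u‖ - ‖v‖| * (‖v‖⁻¹ * ‖u‖⁻¹) * ‖u‖
        = (r * ‖v‖⁻¹) * |‖u‖ - ‖v‖| * (‖u‖⁻¹ * ‖u‖) := by ring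
      _ = (r * ‖v‖⁻¹) * |‖u‖ - ‖v‖| := by rw [inv_mul_cancel₀ hu0.ne', mul_one]
      _ ≤ 1 * ‖v - u‖ := by
          apply mul_le_mul hru hda (abs_nonneg _) zero_le_one
      _ = ‖v - u‖ := one_mul _
  calc ‖(r * ‖v‖⁻¹) • v - (r * ‖u‖⁻¹) • u‖
      ≤ ‖(r * ‖v‖⁻¹) • v - (r * ‖v‖⁻¹) • u‖ + ‖(r * ‖v‖⁻¹) • u - (r * ‖u‖⁻¹) • u‖ :=
        norm_sub_le_norm_sub_add_norm_sub _ _ _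
    _ ≤ ‖v - u‖ + ‖v - u‖ := add_le_add t1 t2
    _ = 2 * ‖v - u‖ := by ring

end Radial

set_option maxHeartbeats 2000000 in
/-- Poincaré–Lyapunov theorem: asymptotic stability of the origin for the
perturbed system `y' = Ay + f(y)` when `‖e^{At}‖ ≤ M e^{-wt}` and
`|f(y)| ≤ L|y|` with `LM - w < 0`. -/
theorem poincare_lyapunov (n : ℕ) (A : Matrix (Fin n) (Fin n) ℝ)
    (M w L : ℝ) (hMpos : 0 < M) (hwpos : 0 < w)
    (hA : ∀ t : ℝ, 0 ≤ t → ∀ v : Fin n → ℝ,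
      ‖(NormedSpace.exp (t • A)).mulVec v‖ ≤ M * Real.exp (-w * t) * ‖v‖)
    (Ω : Set (Fin n → ℝ)) (hΩ : IsOpen Ω) (h0Ω : (0 : Fin n → ℝ) ∈ Ω)
    (f : (Fin n → ℝ) → (Fin n → ℝ))
    (hlip : ∀ y ∈ Ω, ∃ ε > 0, ∃ K : NNReal, LipschitzOnWith K f (Metric.ball y ε ∩ Ω))
    (hf : ∀ y ∈ Ω, ‖f y‖ ≤ L * ‖y‖)
    (hLMw : L * M - w < 0) :
    ∃ ρ > 0, ∀ lam ∈ Metric.ball (0 : Fin n → ℝ) ρ,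
      ∃ y : ℝ → (Fin n → ℝ), y 0 = lam ∧
        (∀ t ∈ Set.Ici (0 : ℝ), y t ∈ Ω ∧
          HasDerivWithinAt y (A.mulVec (y t) + f (y t)) (Set.Ici 0) t) ∧
        Filter.Tendsto y Filter.atTop (nhds 0) ∧
        ∀ t ∈ Set.Ici (0 : ℝ), ‖y t‖ ≤ M * ‖lam‖ * Real.exp ((L * M - w) * t) := by
  rcases Nat.eq_zero_or_pos n with hn | hn
  · subst hn
    refine ⟨1, one_pos, fun lam _ => ⟨fun _ => 0, Subsingleton.elim _ _, fun t _ => ⟨h0Ω, ?_⟩,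
      tendsto_const_nhds, fun t _ => ?_⟩⟩
    · have h0 : A.mulVec ((fun _ : ℝ => (0 : Fin 0 → ℝ)) t) + f ((fun _ : ℝ => (0 : Fin 0 → ℝ)) t)
          = 0 := Subsingleton.elim _ _
      rw [h0]
      exact hasDerivWithinAt_const _ _ _
    · have : ‖(0 : Fin 0 → ℝ)‖ = 0 := norm_zero
      simp only [this]
      positivity
  -- now n > 0
  haveI : Nonempty (Fin n) := ⟨⟨0, hn⟩⟩
  obtain ⟨ε, hε, K, hK⟩ := hlip 0 h0Ω
  obtain ⟨δ, hδ, hδΩ⟩ := Metric.isOpen_iff.1 hΩ 0 h0Ω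
  set r : ℝ := min ε δ / 2 with hrdef
  have hr : 0 < r := by positivity
  have hrsub : Metric.closedBall (0 : Fin n → ℝ) r ⊆ Metric.ball 0 ε ∩ Ω := by
    intro x hx
    rw [Metric.mem_closedBall, dist_zero_right] at hx
    have h1 : ‖x‖ < ε := lt_of_le_of_lt hx (by rw [hrdef]; have := min_le_left ε δ; linarith)
    have h2 : ‖x‖ < δ := lt_of_le_of_lt hx (by rw [hrdef]; have := min_le_right ε δ; linarith)
    exact ⟨by rwa [Metric.mem_ball, dist_zero_right], hδΩ (by rwa [Metric.mem_ball, dist_zero_right])⟩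
  have hL : 0 ≤ L := by
    set p : Fin n → ℝ := fun _ => δ/2 with hpdef
    have hp : ‖p‖ = δ/2 := by
      rw [hpdef, pi_norm_const, Real.norm_eq_abs, abs_of_pos (by positivity)]
    have hpΩ : p ∈ Ω := hδΩ (by rw [Metric.mem_ball, dist_zero_right, hp]; linarith)
    have h1 := hf p hpΩ
    nlinarith [norm_nonneg (f p)]
  -- radial truncation
  set π : (Fin n → ℝ) → (Fin n → ℝ) := fun v => if ‖v‖ ≤ r then v else (r * ‖v‖⁻¹) • v with hπdef
  have hπr : ∀ v, ‖π v‖ ≤ r := by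
    intro v
    simp only [hπdef]
    by_cases h : ‖v‖ ≤ r
    · simpa [h] using h
    · push_neg at h
      have hv0 : (0:ℝ) < ‖v‖ := hr.trans h
      rw [if_neg (not_le.2 h), norm_smul, Real.norm_eq_abs,
        abs_of_pos (mul_pos hr (inv_pos.2 hv0)), mul_assoc,
        inv_mul_cancel₀ hv0.ne', mul_one]
  have hπeq : ∀ v : Fin n → ℝ, ‖v‖ ≤ r → π v = v := fun v h => by
    simp only [hπdef]; simp [h]
  have hπle : ∀ v, ‖π v‖ ≤ ‖v‖ := fun v => by
    rcases le_or_gt (‖v‖) r with h | h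
    · rw [hπeq v h]
    · exact (hπr v).trans h.le
  have hπlip : ∀ v u : Fin n → ℝ, ‖π v - π u‖ ≤ 2 * ‖v - u‖ := by
    intro v u
    simp only [hπdef]
    by_cases h1 : ‖v‖ ≤ r <;> by_cases h2 : ‖u‖ ≤ r
    · simp only [if_pos h1, if_pos h2]
      nlinarith [norm_nonneg (v - u)]
    · push_neg at h2
      simp only [if_pos h1, if_neg (not_le.2 h2)]
      exact pl_radial_aux hr h1 h2
    · push_neg at h1
      simp only [if_neg (not_le.2 h1), if_pos h2]
      rw [norm_sub_rev, show ‖v - u‖ = ‖u - v‖ from norm_sub_rev v u]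
      exact pl_radial_aux hr h2 h1
    · push_neg at h1; push_neg at h2
      simp only [if_neg (not_le.2 h1), if_neg (not_le.2 h2)]
      exact pl_radial_aux2 hr h1 h2
  have hπmem : ∀ v, π v ∈ Metric.ball (0 : Fin n → ℝ) ε ∩ Ω := fun v =>
    hrsub (by rw [Metric.mem_closedBall, dist_zero_right]; exact hπr v)
  -- the truncated vector field
  set F : (Fin n → ℝ) → (Fin n → ℝ) := fun v => A.mulVec (π v) + f (π v) with hFdef
  set T₀ := LinearMap.toContinuousLinearMap (Matrix.mulVecLin A) with hT₀def
  have hT₀ : ∀ v : Fin n → ℝ, A.mulVec v = T₀ v := by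
    intro v
    rw [hT₀def, LinearMap.coe_toContinuousLinearMap', Matrix.mulVecLin_apply]
  set CA : ℝ := ‖T₀‖ with hCAdef
  have hCA0 : 0 ≤ CA := norm_nonneg _
  have hCA : ∀ v : Fin n → ℝ, ‖A.mulVec v‖ ≤ CA * ‖v‖ := fun v => by
    rw [hT₀]; exact T₀.le_opNorm v
  have hKnn : (0:ℝ) ≤ (K : ℝ) := K.2
  have hFlip : LipschitzWith (Real.toNNReal (2*(CA + K))) F := by
    apply LipschitzWith.of_dist_le_mul
    intro v u
    rw [dist_eq_norm, dist_eq_norm]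
    have h1 : ‖F v - F u‖ ≤ ‖A.mulVec (π v) - A.mulVec (π u)‖ + ‖f (π v) - f (π u)‖ := by
      rw [hFdef]
      show ‖(A.mulVec (π v) + f (π v)) - (A.mulVec (π u) + f (π u))‖ ≤ _
      rw [add_sub_add_comm]
      exact norm_add_le _ _
    have h2 : ‖A.mulVec (π v) - A.mulVec (π u)‖ ≤ CA * ‖π v - π u‖ := by
      rw [← Matrix.mulVec_sub]
      exact hCA _
    have h3 : ‖f (π v) - f (π u)‖ ≤ K * ‖π v - π u‖ := by
      have := (lipschitzOnWith_iff_dist_le_mul.1 hK) (π v) (hπmem v) (π u) (hπmem u)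
      rwa [dist_eq_norm, dist_eq_norm] at this
    have h4 := hπlip v u
    have hco : (Real.toNNReal (2*(CA + K)) : ℝ) = 2*(CA + K) :=
      Real.coe_toNNReal _ (by positivity)
    rw [hco]
    nlinarith [norm_nonneg (π v - π u), norm_nonneg (v - u)]
  set Cb : ℝ := CA * r + L * r + 1 with hCbdef
  have hCb : 0 < Cb := by positivity
  have hFb : ∀ v, ‖F v‖ ≤ Cb := by
    intro v
    have h1 : ‖f (π v)‖ ≤ L * ‖π v‖ := hf _ (hπmem v).2
    have h2 : ‖A.mulVec (π v)‖ ≤ CA * ‖π v‖ := hCA _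
    have h3 := hπr v
    have h4 := norm_nonneg (π v)
    calc ‖F v‖ ≤ ‖A.mulVec (π v)‖ + ‖f (π v)‖ := norm_add_le _ _
      _ ≤ CA * r + L * r + 1 := by nlinarith
  -- choose the radius
  refine ⟨min (r/(2*M)) (r/2), by positivity, fun lam hlam => ?_⟩
  have hlam' : ‖lam‖ < min (r/(2*M)) (r/2) := by
    rwa [Metric.mem_ball, dist_zero_right] at hlam
  have hlam1 : ‖lam‖ < r/(2*M) := lt_of_lt_of_le hlam' (min_le_left _ _)
  have hlam2 : ‖lam‖ < r/2 := lt_of_lt_of_le hlam' (min_le_right _ _)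
  have hMlam : M * ‖lam‖ < r/2 := by
    have h := (lt_div_iff₀ (by positivity : (0:ℝ) < 2*M)).1 hlam1
    nlinarith
  obtain ⟨y, hy0, hyode⟩ := pl_global_existence hFlip hCb hFb lam
  have hycont : ContinuousOn y (Ici 0) := fun t ht => (hyode t ht).continuousWithinAt
  have hfc : ContinuousOn f (Metric.ball 0 ε ∩ Ω) := hK.continuousOn
  -- conditional estimate
  have main : ∀ T, 0 ≤ T → (∀ s ∈ Icc (0:ℝ) T, ‖y s‖ < r) →
      ∀ s ∈ Icc (0:ℝ) T, ‖y s‖ ≤ M * ‖lam‖ * Real.exp ((L*M - w)*s) := by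
    intro T hT hsmall
    have hmem : ∀ t ∈ Icc (0:ℝ) T, y t ∈ Metric.ball (0 : Fin n → ℝ) ε ∩ Ω := fun t ht =>
      hrsub (by rw [Metric.mem_closedBall, dist_zero_right]; exact (hsmall t ht).le)
    have hode' : ∀ t ∈ Icc (0:ℝ) T, HasDerivWithinAt y (A.mulVec (y t) + f (y t)) (Icc 0 T) t := by
      intro t ht
      have h1 := (hyode t ht.1).mono (fun s (hs : s ∈ Icc (0:ℝ) T) => hs.1)
      have h2 : π (y t) = y t := hπeq _ (hsmall t ht).le
      rw [hFdef] at h1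
      simp only [h2] at h1
      exact h1
    have hq : ∀ t ∈ Icc (0:ℝ) T, ‖f (y t)‖ ≤ L * ‖y t‖ := fun t ht => hf _ (hmem t ht).2
    have hqc : ContinuousOn (fun s => f (y s)) (Icc 0 T) :=
      hfc.comp (hycont.mono (fun s (hs : s ∈ Icc (0:ℝ) T) => hs.1)) hmem
    intro s hs
    have := pl_voc_estimate A hMpos hL hA hode' hqc hq s hs
    rwa [hy0] at this
  -- bootstrap: solution stays small
  have small : ∀ T, 0 ≤ T → ∀ s ∈ Icc (0:ℝ) T, ‖y s‖ < r := by
    intro T hT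
    set S := {T' : ℝ | T' ∈ Icc (0:ℝ) T ∧ ∀ s ∈ Icc (0:ℝ) T', ‖y s‖ < r} with hSdef
    have h0S : (0:ℝ) ∈ S := by
      refine ⟨⟨le_refl 0, hT⟩, fun s hs => ?_⟩
      have : s = 0 := le_antisymm hs.2 hs.1
      rw [this, hy0]
      linarith
    have hbdd : BddAbove S := ⟨T, fun t' ht' => ht'.1.2⟩
    set c := sSup S with hcdef
    have hc0 : 0 ≤ c := le_csSup hbdd h0S
    have hcT : c ≤ T := csSup_le ⟨0, h0S⟩ (fun t' ht' => ht'.1.2)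
    have hlt : ∀ s, 0 ≤ s → s < c → ‖y s‖ ≤ r/2 := by
      intro s hs0 hsc
      obtain ⟨T', hT'S, hsT'⟩ := exists_lt_of_lt_csSup ⟨0, h0S⟩ hsc
      have h1 := main T' hT'S.1.1 hT'S.2 s ⟨hs0, hsT'.le⟩
      have h2 : Real.exp ((L*M - w)*s) ≤ 1 := by
        rw [Real.exp_le_one_iff]
        exact mul_nonpos_of_nonpos_of_nonneg hLMw.le hs0
      have h3 : M * ‖lam‖ * Real.exp ((L*M - w)*s) ≤ M * ‖lam‖ * 1 :=
        mul_le_mul_of_nonneg_left h2 (by positivity)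
      rw [mul_one] at h3
      linarith
    have hyc : ‖y c‖ ≤ r/2 := by
      rcases eq_or_lt_of_le hc0 with h0c | h0c
      · rw [← h0c, hy0]; linarith
      · have hcont : ContinuousWithinAt (fun s => ‖y s‖) (Ico 0 c) c :=
          ((hycont c hc0).mono Ico_subset_Ici_self).norm
        haveI : (𝓝[Ico (0:ℝ) c] c).NeBot := right_nhdsWithin_Ico_neBot h0c
        refine le_of_tendsto hcont.tendsto ?_
        exact eventually_nhdsWithin_of_forall (fun s hs => hlt s hs.1 hs.2)
    have hTS : T ∈ S := by
      rcases eq_or_lt_of_le hcT with hceT | hclt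
      · have hcS : c ∈ S := by
          refine ⟨⟨hc0, hcT⟩, fun s hs => ?_⟩
          rcases lt_or_eq_of_le hs.2 with h | h
          · exact lt_of_le_of_lt (hlt s hs.1 h) (by linarith)
          · rw [h]; exact lt_of_le_of_lt hyc (by linarith)
        rwa [hceT] at hcS
      · exfalso
        have hcont : ContinuousWithinAt y (Ici 0) c := hycont c hc0
        have hev : ∀ᶠ s in 𝓝[Ici 0] c, dist (y s) (y c) < r/4 :=
          Metric.tendsto_nhds.mp hcont.tendsto (r/4) (by positivity)
        rw [Filter.eventually_iff, Metric.mem_nhdsWithin_iff] at hev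
        obtain ⟨d, hd, hdsub⟩ := hev
        set T'' := min (c + d/2) T with hT''def
        have hT''c : c < T'' := by
          rw [hT''def]
          exact lt_min (by linarith) hclt
        have hT''S : T'' ∈ S := by
          refine ⟨⟨by linarith, min_le_right _ _⟩, fun s hs => ?_⟩
          rcases le_or_gt s c with hsc | hsc
          · rcases lt_or_eq_of_le hsc with h | h
            · exact lt_of_le_of_lt (hlt s hs.1 h) (by linarith)
            · rw [h]; exact lt_of_le_of_lt hyc (by linarith)
          · have hmem : s ∈ Metric.ball c d ∩ Ici 0 := by
              constructor
              · rw [Metric.mem_ball, Real.dist_eq, abs_of_pos (by linarith)]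
                have : s ≤ c + d/2 := hs.2.trans (min_le_left _ _)
                linarith
              · exact hs.1
            have := hdsub hmem
            have hd2 : dist (y s) (y c) < r/4 := this
            have : ‖y s‖ ≤ ‖y c‖ + dist (y s) (y c) := by
              rw [dist_eq_norm]
              calc ‖y s‖ = ‖y c + (y s - y c)‖ := by congr 1; abel
                _ ≤ ‖y c‖ + ‖y s - y c‖ := norm_add_le _ _
            linarith
        have := le_csSup hbdd hT''S
        linarith
    intro s hs
    exact hTS.2 s hs
  -- finish
  refine ⟨y, hy0, fun t ht => ?_, ?_, fun t ht => ?_⟩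
  · have h1 : ‖y t‖ < r := small t ht t ⟨ht, le_refl t⟩
    constructor
    · exact (hrsub (by rw [Metric.mem_closedBall, dist_zero_right]; exact h1.le)).2
    · have hode := hyode t ht
      have h2 : π (y t) = y t := hπeq _ h1.le
      rw [hFdef] at hode
      simp only [h2] at hode
      exact hode
  · apply squeeze_zero_norm' (f := y)
    · filter_upwards [eventually_ge_atTop (0:ℝ)] with t ht
      exact main t ht (small t ht) t ⟨ht, le_refl t⟩
    · have h1 : Tendsto (fun t : ℝ => (L*M - w)*t) atTop atBot :=
        (tendsto_const_mul_atBot_of_neg hLMw).2 tendsto_id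
      have h2 : Tendsto (fun t : ℝ => Real.exp ((L*M - w)*t)) atTop (nhds 0) :=
        Real.tendsto_exp_atBot.comp h1
      have h3 := h2.const_mul (M * ‖lam‖)
      simpa using h3
  · exact main t ht (small t ht) t ⟨ht, le_refl t⟩
end

section
/- Let f : I × Λ × G → ℝⁿ be continuous and locally Lipschitz in y ∈ G, where I ⊆ ℝ, Λ ⊆ ℝᵐ, G ⊆ ℝⁿ are open. Fix x₀ ∈ I, y₀ ∈ G, a compact Σ ⊆ Λ, and a, b > 0 with [x₀−a, x₀+a] ⊆ I and the closed ball B(y₀,b) ⊆ G. Let M = max{|f(x,λ,y)| : x ∈ [x₀−a,x₀+a], λ ∈ Σ, y ∈ B(y₀,b)} and α = min(a, b/M). Then there exists a unique continuous y : [x₀−α, x₀+α] × Σ → B(y₀,b), continuously differentiable in x, with y(x₀,λ) = y₀ and ∂y/∂x(x,λ) = f(x,λ,y(x,λ)) for all x and λ. -/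
open Set Metric Real


lemma gronwallBound_zero_eq_mul (K ε x : ℝ) :
    gronwallBound 0 K ε x = ε * gronwallBound 0 K 1 x := by
  by_cases hK : K = 0
  · simp [gronwallBound, hK]
  · simp [gronwallBound, hK]; ring

lemma gronwallBound_zero_mono {K ε x y : ℝ} (hK : 0 ≤ K) (hε : 0 ≤ ε)
    (hx : 0 ≤ x) (hxy : x ≤ y) :
    gronwallBound 0 K ε x ≤ gronwallBound 0 K ε y := by
  by_cases hK0 : K = 0
  · simp only [gronwallBound, if_pos hK0, zero_add]
    exact mul_le_mul_of_nonneg_left hxy hε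
  · have hKpos : 0 < K := lt_of_le_of_ne hK (Ne.symm hK0)
    simp only [gronwallBound, if_neg hK0, zero_mul, zero_add]
    have : Real.exp (K * x) ≤ Real.exp (K * y) :=
      Real.exp_le_exp.2 (by nlinarith)
    have h1 : 0 ≤ ε / K := div_nonneg hε hK
    nlinarith

lemma gronwallBound_zero_nonneg {K ε x : ℝ} (hK : 0 ≤ K) (hε : 0 ≤ ε) (hx : 0 ≤ x) :
    0 ≤ gronwallBound 0 K ε x := by
  have := gronwallBound_zero_mono hK hε le_rfl hx
  rwa [gronwallBound_x0] at this

variable {E : Type*} [NormedAddCommGroup E] [NormedSpace ℝ E]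

/-- Two-sided Grönwall estimate for two approximate solutions with the same value at an
interior initial time `x₀ ∈ [c, d]`. -/
lemma dist_le_gronwall_two_sided {F₁ F₂ : ℝ → E → E} {s : Set E} {L : NNReal}
    {c d x₀ ε : ℝ} (hx₀ : x₀ ∈ Set.Icc c d) (hε : 0 ≤ ε)
    (hlip : ∀ t ∈ Set.Icc c d, LipschitzOnWith L (F₁ t) s)
    (hFF : ∀ t ∈ Set.Icc c d, ∀ z ∈ s, dist (F₁ t z) (F₂ t z) ≤ ε)
    {g₁ g₂ : ℝ → E}
    (hc₁ : ContinuousOn g₁ (Set.Icc c d)) (hc₂ : ContinuousOn g₂ (Set.Icc c d))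
    (hd₁ : ∀ t ∈ Set.Icc c d, HasDerivWithinAt g₁ (F₁ t (g₁ t)) (Set.Icc c d) t)
    (hd₂ : ∀ t ∈ Set.Icc c d, HasDerivWithinAt g₂ (F₂ t (g₂ t)) (Set.Icc c d) t)
    (hs₁ : ∀ t ∈ Set.Icc c d, g₁ t ∈ s) (hs₂ : ∀ t ∈ Set.Icc c d, g₂ t ∈ s)
    (h₀ : g₁ x₀ = g₂ x₀) :
    ∀ t ∈ Set.Icc c d, dist (g₁ t) (g₂ t) ≤ gronwallBound 0 L ε (d - c) := by
  have hcd : c ≤ d := hx₀.1.trans hx₀.2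
  -- forward estimate on [x₀, d]
  have fwd : ∀ t ∈ Icc x₀ d, dist (g₁ t) (g₂ t) ≤ gronwallBound 0 L (0 + ε) (t - x₀) := by
    refine dist_le_of_approx_trajectories_ODE_of_mem
      (v := F₁) (s := fun t => if t ∈ Icc c d then s else ∅) (K := L)
      (f' := fun t => F₁ t (g₁ t)) (g' := fun t => F₂ t (g₂ t))
      (fun t _ => ?_) (hc₁.mono (Icc_subset_Icc_left hx₀.1)) (fun t ht => ?_)
      (fun t ht => by rw [dist_self]) (fun t ht => ?_)
      (hc₂.mono (Icc_subset_Icc_left hx₀.1)) (fun t ht => ?_) (fun t ht => ?_)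
      (fun t ht => ?_) (by rw [h₀, dist_self])
    · show LipschitzOnWith L (F₁ t) (if t ∈ Icc c d then s else ∅)
      split_ifs with h
      · exact hlip t h
      · exact lipschitzOnWith_empty L (F₁ t)
    · exact (hd₁ t ⟨hx₀.1.trans ht.1, ht.2.le⟩).mono_of_mem_nhdsWithin
        (Icc_mem_nhdsGE_of_mem ⟨hx₀.1.trans ht.1, ht.2⟩)
    · have htm : t ∈ Icc c d := ⟨hx₀.1.trans ht.1, ht.2.le⟩
      simp only [if_pos htm]; exact hs₁ t htm
    · exact (hd₂ t ⟨hx₀.1.trans ht.1, ht.2.le⟩).mono_of_mem_nhdsWithin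
        (Icc_mem_nhdsGE_of_mem ⟨hx₀.1.trans ht.1, ht.2⟩)
    · have htm : t ∈ Icc c d := ⟨hx₀.1.trans ht.1, ht.2.le⟩
      rw [dist_comm]; exact hFF t htm _ (hs₂ t htm)
    · have htm : t ∈ Icc c d := ⟨hx₀.1.trans ht.1, ht.2.le⟩
      simp only [if_pos htm]; exact hs₂ t htm
  -- backward estimate on [c, x₀], via time reversal
  have bwd : ∀ t ∈ Icc c x₀, dist (g₁ t) (g₂ t) ≤ gronwallBound 0 L (0 + ε) (x₀ - t) := by
    have key : ∀ u ∈ Icc (-x₀) (-c),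
        dist (g₁ (-u)) (g₂ (-u)) ≤ gronwallBound 0 L (0 + ε) (u - -x₀) := by
      have hmem : ∀ u ∈ Ico (-x₀) (-c), -u ∈ Ioc c x₀ :=
        fun u hu => ⟨lt_neg.mp hu.2, neg_le.mp hu.1⟩
      have hmem' : ∀ u ∈ Ico (-x₀) (-c), -u ∈ Icc c d :=
        fun u hu => ⟨(hmem u hu).1.le, (hmem u hu).2.trans hx₀.2⟩
      have hmt1 : MapsTo Neg.neg (Icc (-x₀) (-c)) (Icc c d) :=
        fun u hu => ⟨le_neg.mp hu.2, (neg_le.mp hu.1).trans hx₀.2⟩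
      have hmt3 : ∀ u : ℝ, MapsTo Neg.neg (Ici u) (Iic (-u)) :=
        fun u w hw => mem_Iic.mpr (neg_le_neg hw)
      refine dist_le_of_approx_trajectories_ODE_of_mem
        (v := fun u z => -F₁ (-u) z) (s := fun u => if -u ∈ Icc c d then s else ∅) (K := L)
        (f' := fun u => -F₁ (-u) (g₁ (-u))) (g' := fun u => -F₂ (-u) (g₂ (-u)))
        (fun u _ => ?_) (hc₁.comp continuousOn_neg hmt1) (fun u hu => ?_)
        (fun u hu => by rw [dist_self]) (fun u hu => ?_)
        (hc₂.comp continuousOn_neg hmt1) (fun u hu => ?_) (fun u hu => ?_)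
        (fun u hu => ?_) (by rw [neg_neg, h₀, dist_self])
      · show LipschitzOnWith L (fun z => -F₁ (-u) z) (if -u ∈ Icc c d then s else ∅)
        split_ifs with h
        · rw [← one_mul L]
          exact LipschitzWith.id.neg.comp_lipschitzOnWith (hlip _ h)
        · exact lipschitzOnWith_empty _ _
      · have h1 : HasDerivWithinAt g₁ (F₁ (-u) (g₁ (-u))) (Iic (-u)) (-u) :=
          (hd₁ _ (hmem' u hu)).mono_of_mem_nhdsWithin
            (Icc_mem_nhdsLE_of_mem ⟨(hmem u hu).1, (hmem u hu).2.trans hx₀.2⟩)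
        have := HasFDerivWithinAt.comp_hasDerivWithinAt u h1
          (hasDerivAt_neg u).hasDerivWithinAt (hmt3 u)
        convert this using 1
        all_goals simp [Function.comp_def]
      · simp only [if_pos (hmem' u hu)]; exact hs₁ _ (hmem' u hu)
      · have h1 : HasDerivWithinAt g₂ (F₂ (-u) (g₂ (-u))) (Iic (-u)) (-u) :=
          (hd₂ _ (hmem' u hu)).mono_of_mem_nhdsWithin
            (Icc_mem_nhdsLE_of_mem ⟨(hmem u hu).1, (hmem u hu).2.trans hx₀.2⟩)
        have := HasFDerivWithinAt.comp_hasDerivWithinAt u h1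
          (hasDerivAt_neg u).hasDerivWithinAt (hmt3 u)
        convert this using 1
        all_goals simp [Function.comp_def]
      · rw [dist_neg_neg, dist_comm]
        exact hFF _ (hmem' u hu) _ (hs₂ _ (hmem' u hu))
      · simp only [if_pos (hmem' u hu)]; exact hs₂ _ (hmem' u hu)
    intro t ht
    have h2 := key (-t) ⟨neg_le_neg ht.2, neg_le_neg ht.1⟩
    have h3 : (-t) - -x₀ = x₀ - t := by ring
    rw [neg_neg, h3] at h2
    exact h2
  intro t ht
  obtain ⟨ht1, ht2⟩ := ht
  obtain ⟨hx1, hx2⟩ := hx₀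
  rcases le_total t x₀ with h | h
  · refine (bwd t ⟨ht1, h⟩).trans ?_
    rw [zero_add]
    exact gronwallBound_zero_mono L.coe_nonneg hε (by linarith) (by linarith)
  · refine (fwd t ⟨h, ht2⟩).trans ?_
    rw [zero_add]
    exact gronwallBound_zero_mono L.coe_nonneg hε (by linarith) (by linarith)


/-- Cauchy–Lipschitz (Picard–Lindelöf) theorem with parameters. -/
theorem cauchy_lipschitz_with_parameters (n m : ℕ)
    (I : Set ℝ) (Λ : Set (Fin m → ℝ)) (G : Set (Fin n → ℝ))
    (hI : IsOpen I) (hΛ : IsOpen Λ) (hG : IsOpen G)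
    (f : ℝ → (Fin m → ℝ) → (Fin n → ℝ) → (Fin n → ℝ))
    (hf : ContinuousOn (fun p : ℝ × (Fin m → ℝ) × (Fin n → ℝ) => f p.1 p.2.1 p.2.2)
      (I ×ˢ Λ ×ˢ G))
    (hlip : ∀ (J : Set ℝ) (P : Set (Fin m → ℝ)) (K : Set (Fin n → ℝ)),
      IsCompact J → IsCompact P → IsCompact K → J ⊆ I → P ⊆ Λ → K ⊆ G →
      ∃ L > 0, ∀ x ∈ J, ∀ lam ∈ P, ∀ y₁ ∈ K, ∀ y₂ ∈ K,
        ‖f x lam y₁ - f x lam y₂‖ ≤ L * ‖y₁ - y₂‖)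
    (x₀ : ℝ) (y₀ : Fin n → ℝ) (S : Set (Fin m → ℝ))
    (hx₀ : x₀ ∈ I) (hy₀ : y₀ ∈ G) (hSc : IsCompact S) (hSΛ : S ⊆ Λ)
    (a b M α : ℝ) (ha : 0 < a) (hb : 0 < b)
    (hIa : Set.Icc (x₀ - a) (x₀ + a) ⊆ I)
    (hBG : Metric.closedBall y₀ b ⊆ G)
    (hM : IsGreatest {r : ℝ | ∃ x ∈ Set.Icc (x₀ - a) (x₀ + a), ∃ lam ∈ S,
      ∃ y ∈ Metric.closedBall y₀ b, r = ‖f x lam y‖} M)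
    (hα : α = min a (b / M)) :
    ∃ y : ℝ → (Fin m → ℝ) → (Fin n → ℝ),
      ContinuousOn (fun p : ℝ × (Fin m → ℝ) => y p.1 p.2)
        (Set.Icc (x₀ - α) (x₀ + α) ×ˢ S) ∧
      (∀ lam ∈ S, y x₀ lam = y₀) ∧
      (∀ x ∈ Set.Icc (x₀ - α) (x₀ + α), ∀ lam ∈ S, y x lam ∈ Metric.closedBall y₀ b) ∧
      (∀ lam ∈ S, ∀ x ∈ Set.Icc (x₀ - α) (x₀ + α),
        HasDerivWithinAt (fun s => y s lam) (f x lam (y x lam))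
          (Set.Icc (x₀ - α) (x₀ + α)) x) ∧
      ∀ y' : ℝ → (Fin m → ℝ) → (Fin n → ℝ),
        (∀ lam ∈ S, y' x₀ lam = y₀) →
        (∀ x ∈ Set.Icc (x₀ - α) (x₀ + α), ∀ lam ∈ S,
          y' x lam ∈ Metric.closedBall y₀ b) →
        (∀ lam ∈ S, ∀ x ∈ Set.Icc (x₀ - α) (x₀ + α),
          HasDerivWithinAt (fun s => y' s lam) (f x lam (y' x lam))
            (Set.Icc (x₀ - α) (x₀ + α)) x) →
        ∀ x ∈ Set.Icc (x₀ - α) (x₀ + α), ∀ lam ∈ S, y' x lam = y x lam := by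

  classical
  obtain ⟨L, hL0, hLip⟩ := hlip (Set.Icc (x₀ - a) (x₀ + a)) S (Metric.closedBall y₀ b)
    isCompact_Icc hSc (isCompact_closedBall _ _) hIa hSΛ hBG
  obtain ⟨⟨x₁, hx₁, lam₁, hlam₁, y₁, hy₁, hM₁⟩, hMub⟩ := hM
  have hM0 : 0 ≤ M := hM₁ ▸ norm_nonneg _
  have hα0 : 0 ≤ α := hα ▸ le_min ha.le (div_nonneg hb.le hM0)
  have hαa : α ≤ a := hα ▸ min_le_left _ _
  have hMα : M * α ≤ b := by
    rcases eq_or_lt_of_le hM0 with h | h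
    · rw [← h]; simpa using hb.le
    · have hbm : α ≤ b / M := hα ▸ min_le_right _ _
      calc M * α ≤ M * (b / M) := by nlinarith
      _ = b := by field_simp
  have hsub : Set.Icc (x₀ - α) (x₀ + α) ⊆ Set.Icc (x₀ - a) (x₀ + a) :=
    Set.Icc_subset_Icc (by linarith) (by linarith)
  set Lnn : NNReal := ⟨L, hL0.le⟩ with hLnn
  have hlipt : ∀ lam ∈ S, ∀ t ∈ Set.Icc (x₀ - α) (x₀ + α),
      LipschitzOnWith Lnn (fun z => f t lam z) (Metric.closedBall y₀ b) := by
    intro lam hlam t ht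
    rw [lipschitzOnWith_iff_dist_le_mul]
    intro z hz w hw
    rw [dist_eq_norm, dist_eq_norm]
    exact hLip t (hsub ht) lam hlam z hz w hw
  have hnorm : ∀ lam ∈ S, ∀ t ∈ Set.Icc (x₀ - α) (x₀ + α), ∀ z ∈ Metric.closedBall y₀ b,
      ‖f t lam z‖ ≤ M := fun lam hlam t ht z hz => hMub ⟨t, hsub ht, lam, hlam, z, hz, rfl⟩
  have hx₀m : x₀ ∈ Set.Icc (x₀ - α) (x₀ + α) := ⟨by linarith, by linarith⟩
  have hpl : ∀ lam ∈ S, IsPicardLindelof (fun t z => f t lam z)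
      (⟨x₀, hx₀m⟩ : Set.Icc (x₀ - α) (x₀ + α)) y₀ ⟨b, hb.le⟩ 0 ⟨M, hM0⟩ Lnn := by
    intro lam hlam
    refine ⟨hlipt lam hlam, ?_, hnorm lam hlam, ?_⟩
    · intro z hz
      have hcont : ContinuousOn (fun t : ℝ => ((t, lam, z) : ℝ × (Fin m → ℝ) × (Fin n → ℝ)))
          (Set.Icc (x₀ - α) (x₀ + α)) := Continuous.continuousOn (continuous_id.prodMk continuous_const)
      exact hf.comp hcont (fun t ht => ⟨hIa (hsub ht), hSΛ hlam, hBG hz⟩)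
    · have hmax : max ((x₀ + α) - x₀) (x₀ - (x₀ - α)) = α := by
        rw [show (x₀ + α) - x₀ = α by ring, show x₀ - (x₀ - α) = α by ring, max_self]
      simp only [NNReal.coe_mk, NNReal.coe_zero, sub_zero, tsub_zero]
      rw [hmax]; exact hMα
  have hsol : ∀ lam, lam ∈ S → ∃ g : ℝ → Fin n → ℝ,
      (∀ t ∈ Set.Icc (x₀ - α) (x₀ + α), g t ∈ Metric.closedBall y₀ b) ∧
      (∀ t₁ t₂ : ℝ, dist (g t₁) (g t₂) ≤ M * dist t₁ t₂) ∧
      g x₀ = y₀ ∧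
      ∀ t ∈ Set.Icc (x₀ - α) (x₀ + α),
        HasDerivWithinAt g (f t lam (g t)) (Set.Icc (x₀ - α) (x₀ + α)) t := by
    intro lam hlam
    have hfl := hpl lam hlam
    have hy0b : y₀ ∈ Metric.closedBall y₀ (0 : NNReal) := Metric.mem_closedBall_self le_rfl
    obtain ⟨gf, hgf⟩ := ODE.FunSpace.exists_isFixedPt_next hfl hy0b
    refine ⟨gf.compProj, fun t _ => gf.compProj_mem_closedBall hfl.mul_max_le, ?_, ?_, ?_⟩
    · intro t₁ t₂
      calc dist (gf.compProj t₁) (gf.compProj t₂)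
          ≤ (⟨M, hM0⟩ : NNReal) * dist (projIcc (x₀ - α) (x₀ + α) (by linarith) t₁)
              (projIcc (x₀ - α) (x₀ + α) (by linarith) t₂) :=
            gf.lipschitzWith.dist_le_mul _ _
      _ ≤ M * dist t₁ t₂ := by
          refine mul_le_mul_of_nonneg_left ?_ hM0
          have h1 := (LipschitzWith.projIcc (a := x₀ - α) (b := x₀ + α)
            (by linarith)).dist_le_mul t₁ t₂
          simpa using h1
    · rw [ODE.FunSpace.compProj_of_mem (α := gf) hx₀m]
      exact gf.apply_of_zero
    · intro t ht
      apply (ODE.hasDerivWithinAt_picard_Icc hx₀m hfl.continuousOn_uncurry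
        gf.continuous_compProj.continuousOn
        (fun _ _ => gf.compProj_mem_closedBall hfl.mul_max_le) y₀ ht).congr_of_mem _ ht
      intro t' ht'
      nth_rw 1 [← hgf]
      rw [ODE.FunSpace.compProj_of_mem (α := ODE.FunSpace.next hfl hy0b gf) ht']
      rfl
  choose g hgmem hglip hg0 hgderiv using hsol
  set y : ℝ → (Fin m → ℝ) → Fin n → ℝ :=
    fun x lam => if h : lam ∈ S then g lam h x else y₀ with hy
  have hyS : ∀ (lam) (hlam : lam ∈ S) (x : ℝ), y x lam = g lam hlam x :=
    fun lam hlam x => dif_pos hlam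
  have hy0 : ∀ lam ∈ S, y x₀ lam = y₀ := fun lam hlam => by rw [hyS lam hlam, hg0]
  have hymem : ∀ x ∈ Set.Icc (x₀ - α) (x₀ + α), ∀ lam ∈ S, y x lam ∈ Metric.closedBall y₀ b :=
    fun x hx lam hlam => by rw [hyS lam hlam]; exact hgmem lam hlam x hx
  have hyd : ∀ lam ∈ S, ∀ x ∈ Set.Icc (x₀ - α) (x₀ + α),
      HasDerivWithinAt (fun s => y s lam) (f x lam (y x lam)) (Set.Icc (x₀ - α) (x₀ + α)) x := by
    intro lam hlam x hx
    rw [hyS lam hlam x]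
    exact (hgderiv lam hlam x hx).congr (fun s _ => hyS lam hlam s) (hyS lam hlam x)
  have hyc : ∀ lam ∈ S, ContinuousOn (fun s => y s lam) (Set.Icc (x₀ - α) (x₀ + α)) :=
    fun lam hlam t ht => (hyd lam hlam t ht).continuousWithinAt
  -- comparison of solutions for two parameters
  have key : ∀ lam ∈ S, ∀ lam' ∈ S, ∀ δ' : ℝ, 0 ≤ δ' →
      (∀ t ∈ Set.Icc (x₀ - α) (x₀ + α), ∀ z ∈ Metric.closedBall y₀ b,
        dist (f t lam z) (f t lam' z) ≤ δ') →
      ∀ x ∈ Set.Icc (x₀ - α) (x₀ + α),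
        dist (y x lam) (y x lam') ≤ δ' * gronwallBound 0 (Lnn : ℝ) 1 ((x₀ + α) - (x₀ - α)) := by
    intro lam hlam lam' hlam' δ' hδ' hFF x hx
    have h := dist_le_gronwall_two_sided (F₁ := fun t z => f t lam z)
      (F₂ := fun t z => f t lam' z) (s := Metric.closedBall y₀ b) (L := Lnn)
      hx₀m hδ' (hlipt lam hlam) hFF (hyc lam hlam) (hyc lam' hlam')
      (hyd lam hlam) (hyd lam' hlam')
      (fun t ht => hymem t ht lam hlam) (fun t ht => hymem t ht lam' hlam')
      (by rw [hy0 lam hlam, hy0 lam' hlam']) x hx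
    rwa [gronwallBound_zero_eq_mul] at h
  refine ⟨y, ?_, hy0, hymem, hyd, ?_⟩
  · -- joint continuity
    have hKc : IsCompact ((Set.Icc (x₀ - a) (x₀ + a)) ×ˢ S ×ˢ Metric.closedBall y₀ b) :=
      isCompact_Icc.prod (hSc.prod (isCompact_closedBall _ _))
    have hucont := hKc.uniformContinuousOn_of_continuous
      (hf.mono (Set.prod_mono hIa (Set.prod_mono hSΛ hBG)))
    rw [Metric.uniformContinuousOn_iff] at hucont
    rintro ⟨xb, lamb⟩ hp
    have hxb : xb ∈ Set.Icc (x₀ - α) (x₀ + α) := hp.1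
    have hlamb : lamb ∈ S := hp.2
    rw [Metric.continuousWithinAt_iff]
    intro ε hε
    set E₀ : ℝ := gronwallBound 0 (Lnn : ℝ) 1 ((x₀ + α) - (x₀ - α)) with hE₀def
    have hE₀ : 0 ≤ E₀ := gronwallBound_zero_nonneg Lnn.coe_nonneg zero_le_one (by linarith)
    set δ' : ℝ := ε / (2 * (E₀ + 1)) with hδ'def
    have hδ' : 0 < δ' := by positivity
    obtain ⟨η, hη, hη'⟩ := hucont δ' hδ'
    refine ⟨min η (ε / (2 * (M + 1))), lt_min hη (by positivity), ?_⟩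
    rintro ⟨x, lam⟩ hq hdist
    have hx : x ∈ Set.Icc (x₀ - α) (x₀ + α) := hq.1
    have hlam : lam ∈ S := hq.2
    rw [Prod.dist_eq] at hdist
    have hdx : dist x xb < ε / (2 * (M + 1)) :=
      lt_of_le_of_lt (le_max_left _ _) (lt_of_lt_of_le hdist (min_le_right _ _))
    have hdlam : dist lam lamb < η :=
      lt_of_le_of_lt (le_max_right _ _) (lt_of_lt_of_le hdist (min_le_left _ _))
    have hFb : ∀ t ∈ Set.Icc (x₀ - α) (x₀ + α), ∀ z ∈ Metric.closedBall y₀ b,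
        dist (f t lam z) (f t lamb z) ≤ δ' := by
      intro t ht z hz
      have h1 : ((t, lam, z) : ℝ × (Fin m → ℝ) × (Fin n → ℝ))
          ∈ (Set.Icc (x₀ - a) (x₀ + a)) ×ˢ S ×ˢ Metric.closedBall y₀ b :=
        ⟨hsub ht, hlam, hz⟩
      have h2 : ((t, lamb, z) : ℝ × (Fin m → ℝ) × (Fin n → ℝ))
          ∈ (Set.Icc (x₀ - a) (x₀ + a)) ×ˢ S ×ˢ Metric.closedBall y₀ b :=
        ⟨hsub ht, hlamb, hz⟩
      have hd12 : dist ((t, lam, z) : ℝ × (Fin m → ℝ) × (Fin n → ℝ)) ((t, lamb, z)) < η := by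
        rw [Prod.dist_eq, Prod.dist_eq, dist_self, dist_self,
          max_eq_left dist_nonneg, max_eq_right dist_nonneg]
        exact hdlam
      exact (hη' _ h1 _ h2 hd12).le
    have hterm2 : dist (y xb lam) (y xb lamb) ≤ ε / 2 := by
      have h := key lam hlam lamb hlamb δ' hδ'.le hFb xb hxb
      have hEp : (0:ℝ) < E₀ + 1 := by linarith
      calc dist (y xb lam) (y xb lamb) ≤ δ' * E₀ := h
      _ ≤ δ' * (E₀ + 1) := by nlinarith
      _ = ε / 2 := by rw [hδ'def]; field_simp
    have hterm1 : dist (y x lam) (y xb lam) < ε / 2 := by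
      rw [hyS lam hlam, hyS lam hlam]
      calc dist (g lam hlam x) (g lam hlam xb) ≤ M * dist x xb := hglip lam hlam x xb
      _ ≤ (M + 1) * dist x xb := by nlinarith [dist_nonneg (x := x) (y := xb)]
      _ < (M + 1) * (ε / (2 * (M + 1))) := by
          exact mul_lt_mul_of_pos_left hdx (by linarith)
      _ = ε / 2 := by field_simp
    calc dist (y x lam) (y xb lamb) ≤ dist (y x lam) (y xb lam) + dist (y xb lam) (y xb lamb) :=
          dist_triangle _ _ _
    _ < ε := by linarith
  · -- uniqueness
    intro y' hy'0 hy'mem hy'd x hx lam hlam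
    have hy'c : ContinuousOn (fun s => y' s lam) (Set.Icc (x₀ - α) (x₀ + α)) :=
      fun t ht => (hy'd lam hlam t ht).continuousWithinAt
    have h := dist_le_gronwall_two_sided (F₁ := fun t z => f t lam z)
      (F₂ := fun t z => f t lam z) (s := Metric.closedBall y₀ b) (L := Lnn)
      hx₀m le_rfl (hlipt lam hlam) (fun t _ z _ => by rw [dist_self])
      hy'c (hyc lam hlam) (hy'd lam hlam) (hyd lam hlam)
      (fun t ht => hy'mem t ht lam hlam) (fun t ht => hymem t ht lam hlam)
      (by rw [hy'0 lam hlam, hy0 lam hlam]) x hx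
    rw [gronwallBound_ε0_δ0] at h
    exact dist_le_zero.mp h
end

section
/- Let f : I × G → ℝⁿ be continuous, where I ⊆ ℝ and G ⊆ ℝⁿ are open, and let (x₀,y₀) ∈ I × G. Then there exist an interval J ⊆ I containing x₀ and a continuously differentiable function y : J → G with y(x₀) = y₀ and y'(x) = f(x, y(x)) for all x ∈ J. -/
open Set Metric intervalIntegral

variable {E : Type*} [NormedAddCommGroup E] [NormedSpace ℝ E]

noncomputable def pClamp (y₀ : E) (r : ℝ) (v : E) : E :=
  y₀ + (r / max r ‖v - y₀‖) • (v - y₀)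

lemma pClamp_continuous (y₀ : E) {r : ℝ} (hr : 0 < r) : Continuous (pClamp y₀ r) := by
  refine continuous_const.add (Continuous.smul ?_ (continuous_id.sub continuous_const))
  exact continuous_const.div (continuous_const.max ((continuous_id.sub continuous_const).norm))
    (fun v => (lt_max_of_lt_left hr).ne')

lemma pClamp_mem (y₀ : E) {r : ℝ} (hr : 0 < r) (v : E) :
    pClamp y₀ r v ∈ closedBall y₀ r := by
  have hmax : (0:ℝ) < max r ‖v - y₀‖ := lt_max_of_lt_left hr
  have h1 : ‖v - y₀‖ ≤ max r ‖v - y₀‖ := le_max_right _ _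
  simp only [pClamp, mem_closedBall, dist_eq_norm, add_sub_cancel_left, norm_smul,
    Real.norm_eq_abs]
  rw [abs_of_nonneg (by positivity)]
  calc r / max r ‖v - y₀‖ * ‖v - y₀‖ ≤ r / max r ‖v - y₀‖ * max r ‖v - y₀‖ := by
        exact mul_le_mul_of_nonneg_left h1 (by positivity)
    _ = r := div_mul_cancel₀ _ hmax.ne'

lemma pClamp_of_mem (y₀ : E) {r : ℝ} (hr : 0 < r) {v : E} (h : v ∈ closedBall y₀ r) :
    pClamp y₀ r v = v := by
  have : max r ‖v - y₀‖ = r := max_eq_left (by rwa [mem_closedBall, dist_eq_norm] at h)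
  simp [pClamp, this, div_self hr.ne']

variable [CompleteSpace E]

noncomputable def pSeq (F : ℝ → E → E) (x₀ : ℝ) (y₀ : E) (d : ℝ) : ℕ → ℝ → E
  | 0 => fun _ => y₀
  | j+1 => fun x => y₀ + ∫ t in x₀..(max x x₀), F t (pSeq F x₀ y₀ d j (t - d))

section pSeq

variable {F : ℝ → E → E} {M : ℝ} {x₀ : ℝ} {y₀ : E} {d : ℝ}
variable (hF : Continuous fun p : ℝ × E => F p.1 p.2)

include hF

lemma pSeq_continuous (j : ℕ) : Continuous (pSeq F x₀ y₀ d j) := by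
  induction j with
  | zero => exact continuous_const
  | succ j ih =>
    have hcont : Continuous fun t => F t (pSeq F x₀ y₀ d j (t - d)) :=
      hF.comp (continuous_id.prodMk (ih.comp (continuous_id.sub continuous_const)))
    have hprim : Continuous fun b => ∫ t in x₀..b, F t (pSeq F x₀ y₀ d j (t - d)) :=
      intervalIntegral.continuous_primitive (fun a b => hcont.intervalIntegrable _ _) _
    exact continuous_const.add (hprim.comp (continuous_id.max continuous_const))

lemma pSeq_integrand_continuous (j : ℕ) :
    Continuous fun t => F t (pSeq F x₀ y₀ d j (t - d)) :=
  hF.comp (continuous_id.prodMk ((pSeq_continuous hF j).comp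
    (continuous_id.sub continuous_const)))

lemma pSeq_agree (hd : 0 < d) (j : ℕ) {x : ℝ} (hx : x ≤ x₀ + j * d) :
    pSeq F x₀ y₀ d (j+1) x = pSeq F x₀ y₀ d j x := by
  induction j generalizing x with
  | zero =>
    have hx' : x ≤ x₀ := by simpa using hx
    simp [pSeq, max_eq_right hx']
  | succ j ih =>
    show y₀ + _ = y₀ + _
    congr 1
    refine intervalIntegral.integral_congr fun t ht => ?_
    rw [uIcc_of_le (le_max_right _ _)] at ht
    have ht2 : t - d ≤ x₀ + j * d := by
      have : t ≤ max x x₀ := ht.2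
      have hxx : max x x₀ ≤ x₀ + (j+1) * d := by
        refine max_le (by exact_mod_cast hx) ?_
        nlinarith [hd.le, Nat.cast_nonneg (α := ℝ) j]
      push_cast at hxx ⊢
      nlinarith
    rw [ih ht2]

variable (hM : ∀ t v, ‖F t v‖ ≤ M)
include hM

lemma pSeq_bound (j : ℕ) (x : ℝ) :
    ‖pSeq F x₀ y₀ d j x - y₀‖ ≤ M * (max x x₀ - x₀) := by
  have hM0 : 0 ≤ M := le_trans (norm_nonneg _) (hM 0 y₀)
  cases j with
  | zero =>
    simp only [pSeq, sub_self, norm_zero]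
    exact mul_nonneg hM0 (sub_nonneg.2 (le_max_right _ _))
  | succ j =>
    show ‖y₀ + _ - y₀‖ ≤ _
    rw [add_sub_cancel_left]
    have := intervalIntegral.norm_integral_le_of_norm_le_const
      (C := M) (a := x₀) (b := max x x₀)
      (f := fun t => F t (pSeq F x₀ y₀ d j (t - d))) (fun t _ => hM _ _)
    rwa [abs_of_nonneg (by simp [le_max_right])] at this

lemma pSeq_lip (j : ℕ) (x x' : ℝ) :
    ‖pSeq F x₀ y₀ d j x - pSeq F x₀ y₀ d j x'‖ ≤ M * |x - x'| := by
  have hM0 : 0 ≤ M := le_trans (norm_nonneg _) (hM 0 y₀)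
  cases j with
  | zero => simp [pSeq]; positivity
  | succ j =>
    show ‖(y₀ + _) - (y₀ + _)‖ ≤ _
    rw [add_sub_add_left_eq_sub]
    have hint : ∀ a b : ℝ, IntervalIntegrable
        (fun t => F t (pSeq F x₀ y₀ d j (t - d))) MeasureTheory.volume a b :=
      fun a b => (pSeq_integrand_continuous hF j).intervalIntegrable _ _
    rw [intervalIntegral.integral_interval_sub_left (hint _ _) (hint _ _)]
    have h1 := intervalIntegral.norm_integral_le_of_norm_le_const
      (C := M) (a := max x' x₀) (b := max x x₀)
      (f := fun t => F t (pSeq F x₀ y₀ d j (t - d))) (fun t _ => hM _ _)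
    refine h1.trans (mul_le_mul_of_nonneg_left ?_ hM0)
    exact abs_max_sub_max_le_abs _ _ _

lemma pSeq_fixed (hd : 0 < d) (j : ℕ) {x : ℝ} (hx : x ≤ x₀ + (j+1) * d) :
    pSeq F x₀ y₀ d (j+1) x
      = y₀ + ∫ t in x₀..(max x x₀), F t (pSeq F x₀ y₀ d (j+1) (t - d)) := by
  show y₀ + _ = y₀ + _
  congr 1
  refine intervalIntegral.integral_congr fun t ht => ?_
  rw [uIcc_of_le (le_max_right _ _)] at ht
  have ht2 : t - d ≤ x₀ + j * d := by
    have h1 : t ≤ max x x₀ := ht.2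
    have h2 : max x x₀ ≤ x₀ + (j+1) * d := by
      refine max_le hx ?_
      nlinarith [hd.le, Nat.cast_nonneg (α := ℝ) j]
    push_cast at h2 ⊢
    nlinarith
  rw [pSeq_agree hF hd j ht2]

end pSeq

lemma pCompact {a b M r : ℝ} (hM : 0 ≤ M) (y₀ : E) [ProperSpace E] :
    IsCompact {g : C(Icc a b, E) |
      (∀ s t : Icc a b, dist (g s) (g t) ≤ M * dist s t) ∧
      ∀ t, g t ∈ closedBall y₀ r} := by
  set S : Set C(Icc a b, E) := {g : C(Icc a b, E) |
      (∀ s t : Icc a b, dist (g s) (g t) ≤ M * dist s t) ∧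
      ∀ t, g t ∈ closedBall y₀ r} with hS
  have hTclosed : IsClosed {g : Icc a b → E |
      (∀ s t : Icc a b, dist (g s) (g t) ≤ M * dist s t) ∧
      ∀ t, g t ∈ closedBall y₀ r} := by
    have h1 : IsClosed {g : Icc a b → E |
        ∀ s t : Icc a b, dist (g s) (g t) ≤ M * dist s t} := by
      simp only [setOf_forall]
      exact isClosed_iInter fun s => isClosed_iInter fun t =>
        isClosed_le ((continuous_apply s).dist (continuous_apply t)) continuous_const
    have h2 : IsClosed {g : Icc a b → E | ∀ t, g t ∈ closedBall y₀ r} := by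
      simp only [setOf_forall]
      exact isClosed_iInter fun t =>
        Metric.isClosed_closedBall.preimage (continuous_apply t)
    exact h1.inter h2
  have hT : IsCompact {g : Icc a b → E |
      (∀ s t : Icc a b, dist (g s) (g t) ≤ M * dist s t) ∧
      ∀ t, g t ∈ closedBall y₀ r} := by
    refine (isCompact_univ_pi fun _ : Icc a b => isCompact_closedBall y₀ r).of_isClosed_subset
      hTclosed ?_
    exact fun g hg => fun t _ => hg.2 t
  have himg : ContinuousMap.toFun '' S = {g : Icc a b → E |
      (∀ s t : Icc a b, dist (g s) (g t) ≤ M * dist s t) ∧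
      ∀ t, g t ∈ closedBall y₀ r} := by
    ext g
    constructor
    · rintro ⟨h, hh, rfl⟩; exact hh
    · intro hg
      have hlip : LipschitzWith ⟨M, hM⟩ g :=
        LipschitzWith.of_dist_le_mul fun s t => hg.1 s t
      exact ⟨⟨g, hlip.continuous⟩, hg, rfl⟩
  refine ArzelaAscoli.isCompact_of_equicontinuous S (himg ▸ hT) ?_
  intro x
  rw [Metric.equicontinuousAt_iff]
  intro ε hε
  refine ⟨ε / (M + 1), by positivity, fun y hy g => ?_⟩
  calc dist (g.1 x) (g.1 y) ≤ M * dist x y := g.2.1 x y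
    _ ≤ M * (ε / (M+1)) := mul_le_mul_of_nonneg_left (dist_comm x y ▸ hy.le) hM
    _ < ε := by
        rw [div_eq_inv_mul, ← mul_assoc]
        have : M * (M+1)⁻¹ < 1 := by
          rw [mul_inv_lt_iff₀ (by linarith)]; linarith
        nlinarith

open Filter Topology

/-- Peano's existence theorem: a continuous right-hand side admits a local
solution of the Cauchy problem. -/
theorem peano_existence (n : ℕ) (I : Set ℝ) (G : Set (Fin n → ℝ))
    (hI : IsOpen I) (hG : IsOpen G)
    (f : ℝ → (Fin n → ℝ) → (Fin n → ℝ))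
    (hf : ContinuousOn (fun p : ℝ × (Fin n → ℝ) => f p.1 p.2) (I ×ˢ G))
    (x₀ : ℝ) (y₀ : Fin n → ℝ) (hx₀ : x₀ ∈ I) (hy₀ : y₀ ∈ G) :
    ∃ α > 0, Set.Icc x₀ (x₀ + α) ⊆ I ∧
      ∃ y : ℝ → (Fin n → ℝ), y x₀ = y₀ ∧
        ∀ x ∈ Set.Icc x₀ (x₀ + α), y x ∈ G ∧
          HasDerivWithinAt y (f x (y x)) (Set.Icc x₀ (x₀ + α)) x := by
  classical
  -- radii
  obtain ⟨rI, hrI, hrII⟩ : ∃ rI > 0, Icc (x₀ - rI) (x₀ + rI) ⊆ I := by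
    obtain ⟨ε, hε, hsub⟩ := Metric.isOpen_iff.1 hI x₀ hx₀
    refine ⟨ε/2, by positivity, fun t ht => hsub ?_⟩
    rw [mem_ball, Real.dist_eq, abs_sub_lt_iff]
    constructor <;> [linarith [ht.2]; linarith [ht.1]]
  obtain ⟨rG, hrG, hrGG⟩ : ∃ rG > 0, closedBall y₀ rG ⊆ G := by
    obtain ⟨ε, hε, hsub⟩ := Metric.isOpen_iff.1 hG y₀ hy₀
    exact ⟨ε/2, by positivity, fun v hv =>
      hsub (lt_of_le_of_lt (mem_closedBall.1 hv) (by linarith))⟩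
  set r : ℝ := min rI rG with hrdef
  have hr : 0 < r := lt_min hrI hrG
  -- compact rectangle and bound
  set K : Set (ℝ × (Fin n → ℝ)) := Icc (x₀ - r) (x₀ + r) ×ˢ closedBall y₀ r with hKdef
  have hK : IsCompact K := isCompact_Icc.prod (isCompact_closedBall _ _)
  have hKsub : K ⊆ I ×ˢ G := by
    rintro ⟨t, v⟩ ⟨ht, hv⟩
    refine ⟨hrII ⟨by simp only [hrdef] at ht ⊢; linarith [ht.1, min_le_left rI rG],
      by simp only [hrdef] at ht ⊢; linarith [ht.2, min_le_left rI rG]⟩,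
      hrGG (closedBall_subset_closedBall (min_le_right rI rG) hv)⟩
  obtain ⟨M₀, hM₀⟩ := hK.exists_bound_of_continuousOn (hf.mono hKsub)
  set M : ℝ := max M₀ 1 with hMdef
  have hM1 : (1:ℝ) ≤ M := le_max_right _ _
  have hM0 : (0:ℝ) < M := lt_of_lt_of_le one_pos hM1
  -- clamped right-hand side
  set cT : ℝ → ℝ := fun t => max (x₀ - r) (min t (x₀ + r)) with hcT
  have hcT_mem : ∀ t, cT t ∈ Icc (x₀ - r) (x₀ + r) := fun t =>
    ⟨le_max_left _ _, max_le (by linarith) (min_le_right _ _)⟩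
  have hcT_id : ∀ t ∈ Icc (x₀ - r) (x₀ + r), cT t = t := fun t ht => by
    simp only [hcT]; rw [min_eq_left ht.2, max_eq_right ht.1]
  have hcT_cont : Continuous cT := continuous_const.max (continuous_id.min continuous_const)
  set F : ℝ → (Fin n → ℝ) → (Fin n → ℝ) := fun t v => f (cT t) (pClamp y₀ r v) with hFdef
  have hFcont : Continuous fun p : ℝ × (Fin n → ℝ) => F p.1 p.2 := by
    simp only [hFdef]
    refine hf.comp_continuous ((hcT_cont.comp continuous_fst).prodMk
      ((pClamp_continuous y₀ hr).comp continuous_snd)) fun p => ?_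
    exact hKsub ⟨hcT_mem p.1, pClamp_mem y₀ hr p.2⟩
  have hFeq : ∀ t ∈ Icc (x₀ - r) (x₀ + r), ∀ v ∈ closedBall y₀ r, F t v = f t v := by
    intro t ht v hv
    simp only [hFdef, hcT_id t ht, pClamp_of_mem y₀ hr hv]
  have hFbound : ∀ (t : ℝ) (v : (Fin n → ℝ)), ‖F t v‖ ≤ M :=
    fun t v => le_trans (hM₀ (cT t, pClamp y₀ r v) ⟨hcT_mem t, pClamp_mem y₀ hr v⟩)
      (le_max_left _ _)
  -- the interval
  set α : ℝ := min r (r / M) with hαdef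
  have hα : 0 < α := lt_min hr (by positivity)
  have hαr : α ≤ r := min_le_left _ _
  have hαM : M * α ≤ r := by
    have : α ≤ r / M := min_le_right _ _
    calc M * α ≤ M * (r / M) := by nlinarith
      _ = r := by field_simp
  have hrrI : r ≤ rI := min_le_left rI rG
  have hJI : Icc x₀ (x₀ + α) ⊆ I := fun t ht => hrII
    ⟨by linarith [ht.1], by linarith [ht.2, hαr]⟩
  refine ⟨α, hα, hJI, ?_⟩
  -- delayed approximations
  set d : ℕ → ℝ := fun k => α / (k + 1) with hddef
  have hdpos : ∀ k, 0 < d k := fun k => by positivity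
  set w : ℕ → ℝ → (Fin n → ℝ) := fun k => pSeq F x₀ y₀ (d k) (k + 1) with hwdef
  have hwcont : ∀ k, Continuous (w k) := fun k => pSeq_continuous hFcont _
  have hwfix : ∀ k, ∀ x ∈ Icc x₀ (x₀ + α),
      w k x = y₀ + ∫ t in x₀..x, F t (w k (t - d k)) := by
    intro k x hx
    have h1 : x ≤ x₀ + ((k:ℝ) + 1) * d k := by
      have : ((k:ℝ) + 1) * d k = α := by
        simp only [hddef]; field_simp
      rw [this]; exact hx.2
    have h2 := pSeq_fixed hFcont hFbound (y₀ := y₀) (hdpos k) (d := d k) k h1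
    rw [max_eq_left hx.1] at h2
    exact h2
  have hwball : ∀ k x, x ≤ x₀ + α → w k x ∈ closedBall y₀ r := by
    intro k x hxle
    rw [mem_closedBall, dist_eq_norm]
    calc ‖w k x - y₀‖ ≤ M * (max x x₀ - x₀) := pSeq_bound hFcont hFbound _ _
      _ ≤ M * α := by
          have : max x x₀ ≤ x₀ + α := max_le hxle (by linarith)
          nlinarith
      _ ≤ r := hαM
  have hwlip : ∀ k x x', ‖w k x - w k x'‖ ≤ M * |x - x'| :=
    fun k x x' => pSeq_lip hFcont hFbound _ _ _
  -- Arzelà–Ascoli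
  set J : Set ℝ := Icc x₀ (x₀ + α) with hJdef
  set wc : ℕ → C(J, (Fin n → ℝ)) := fun k =>
    ⟨fun t => w k t, (hwcont k).comp continuous_subtype_val⟩ with hwcdef
  have hwcS : ∀ k, wc k ∈ {g : C(J, (Fin n → ℝ)) |
      (∀ s t : J, dist (g s) (g t) ≤ M * dist s t) ∧
      ∀ t, g t ∈ closedBall y₀ r} := by
    intro k
    constructor
    · intro s t
      rw [Subtype.dist_eq, Real.dist_eq, dist_eq_norm]
      exact hwlip k s t
    · exact fun t => hwball k t t.2.2
  obtain ⟨ylim, hylimS, φ, hφ, hconv⟩ := (pCompact hM0.le y₀).tendsto_subseq hwcS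
  -- the limit function, extended to ℝ
  have hx₀α : x₀ ≤ x₀ + α := by linarith
  set ytil : ℝ → (Fin n → ℝ) := fun x => ylim (projIcc x₀ (x₀ + α) hx₀α x) with hytildef
  have hytil_cont : Continuous ytil := ylim.continuous.comp continuous_projIcc
  have hytil_eq : ∀ x (hx : x ∈ J), ytil x = ylim ⟨x, hx⟩ := by
    intro x hx; simp only [hytildef, projIcc_of_mem hx₀α hx]
  have hytil_ball : ∀ x, ytil x ∈ closedBall y₀ r := fun x => hylimS.2 _
  -- key integral identity for the limit
  have hkey : ∀ x ∈ J, ytil x = y₀ + ∫ t in x₀..x, F t (ytil t) := by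
    intro x hx
    have h1 : Tendsto (fun m => w (φ m) x) atTop (𝓝 (ytil x)) := by
      rw [hytil_eq x hx]
      have heval := ((continuous_eval_const (F := C(J, Fin n → ℝ)) (⟨x, hx⟩ : J)).tendsto ylim).comp hconv
      exact heval
    have h2 : Tendsto (fun m => w (φ m) x) atTop
        (𝓝 (y₀ + ∫ t in x₀..x, F t (ytil t))) := by
      have hrw : (fun m => w (φ m) x)
          = fun m => y₀ + ∫ t in x₀..x, F t (w (φ m) (t - d (φ m))) :=
        funext fun m => hwfix (φ m) x hx
      rw [hrw]
      refine Tendsto.const_add _ ?_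
      rw [Metric.tendsto_atTop]
      intro ε hε
      -- uniform continuity of F on J × ball
      have hK2 : IsCompact (J ×ˢ closedBall y₀ r) :=
        isCompact_Icc.prod (isCompact_closedBall _ _)
      have huc := hK2.uniformContinuousOn_of_continuous hFcont.continuousOn
      rw [Metric.uniformContinuousOn_iff] at huc
      obtain ⟨δ, hδ, hδ'⟩ := huc (ε / (2 * (α + 1))) (by positivity)
      -- eventual smallness
      have hd0 : Tendsto (fun m => M * d (φ m) + dist (wc (φ m)) ylim) atTop (𝓝 0) := by
        have hA : Tendsto (fun m => d (φ m)) atTop (𝓝 0) := by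
          have hg : Tendsto (fun m : ℕ => α / ((m:ℝ) + 1)) atTop (𝓝 0) := by
            have h3 : Tendsto (fun m : ℕ => α * (1 / ((m:ℝ) + 1))) atTop (𝓝 (α * 0)) :=
              tendsto_const_nhds.mul tendsto_one_div_add_atTop_nhds_zero_nat
            simpa [div_eq_mul_inv] using h3
          refine squeeze_zero (fun m => (hdpos _).le) (fun m => ?_) hg
          have hmφ : (m:ℝ) ≤ (φ m : ℝ) := Nat.cast_le.2 hφ.le_apply
          simp only [hddef]
          gcongr
        have hB : Tendsto (fun m => dist (wc (φ m)) ylim) atTop (𝓝 0) :=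
          tendsto_iff_dist_tendsto_zero.1 hconv
        simpa using (hA.const_mul M).add hB
      have hev : ∀ᶠ m in atTop, M * d (φ m) + dist (wc (φ m)) ylim < δ :=
        hd0.eventually (gt_mem_nhds hδ)
      obtain ⟨N, hN⟩ := eventually_atTop.1 hev
      refine ⟨N, fun m hm => ?_⟩
      have hxx : x₀ ≤ x := hx.1
      have hint1 : IntervalIntegrable (fun t => F t (w (φ m) (t - d (φ m))))
          MeasureTheory.volume x₀ x :=
        (pSeq_integrand_continuous hFcont _).intervalIntegrable _ _
      have hint2 : IntervalIntegrable (fun t => F t (ytil t)) MeasureTheory.volume x₀ x :=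
        (hFcont.comp (continuous_id.prodMk hytil_cont)).intervalIntegrable _ _
      rw [dist_eq_norm, ← intervalIntegral.integral_sub hint1 hint2]
      have hpt : ∀ t ∈ uIoc x₀ x,
          ‖F t (w (φ m) (t - d (φ m))) - F t (ytil t)‖ ≤ ε / (2 * (α + 1)) := by
        intro t ht
        rw [uIoc_of_le hxx] at ht
        have htJ : t ∈ J := ⟨ht.1.le, le_trans ht.2 hx.2⟩
        have hv1 : w (φ m) (t - d (φ m)) ∈ closedBall y₀ r :=
          hwball _ _ (by linarith [htJ.2, (hdpos (φ m)).le])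
        have hmem1 : ((t, w (φ m) (t - d (φ m))) : ℝ × (Fin n → ℝ)) ∈ J ×ˢ closedBall y₀ r :=
          ⟨htJ, hv1⟩
        have hmem2 : ((t, ytil t) : ℝ × (Fin n → ℝ)) ∈ J ×ˢ closedBall y₀ r := ⟨htJ, hytil_ball t⟩
        have hdistpair : dist ((t, w (φ m) (t - d (φ m))) : ℝ × (Fin n → ℝ)) (t, ytil t) < δ := by
          rw [Prod.dist_eq]
          simp only [dist_self]
          rw [max_eq_right dist_nonneg]
          calc dist (w (φ m) (t - d (φ m))) (ytil t)
              ≤ dist (w (φ m) (t - d (φ m))) (w (φ m) t) + dist (w (φ m) t) (ytil t) :=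
                dist_triangle _ _ _
            _ ≤ M * d (φ m) + dist (wc (φ m)) ylim := by
                gcongr
                · rw [dist_eq_norm]
                  have := hwlip (φ m) (t - d (φ m)) t
                  rwa [show t - d (φ m) - t = -(d (φ m)) by ring, abs_neg,
                    abs_of_pos (hdpos _)] at this
                · rw [hytil_eq t htJ]
                  exact ContinuousMap.dist_apply_le_dist
                    (f := wc (φ m)) (g := ylim) (⟨t, htJ⟩ : J)
            _ < δ := hN m hm
        have hlt := hδ' _ hmem1 _ hmem2 hdistpair
        rw [dist_eq_norm] at hlt
        exact hlt.le
      calc ‖∫ t in x₀..x, (F t (w (φ m) (t - d (φ m))) - F t (ytil t))‖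
          ≤ ε / (2 * (α + 1)) * |x - x₀| :=
            intervalIntegral.norm_integral_le_of_norm_le_const hpt
        _ ≤ ε / (2 * (α + 1)) * (α + 1) := by
            gcongr
            rw [abs_of_nonneg (by linarith)]
            linarith [hx.2]
        _ < ε := by
            rw [div_mul_eq_mul_div, mul_comm]
            rw [div_lt_iff₀ (by positivity)]
            nlinarith
    exact (tendsto_nhds_unique h1 h2)
  -- final solution
  set g : ℝ → (Fin n → ℝ) := fun t => F t (ytil t) with hgdef
  have hgcont : Continuous g := hFcont.comp (continuous_id.prodMk hytil_cont)
  refine ⟨fun x => y₀ + ∫ t in x₀..x, g t, by simp, fun x hx => ?_⟩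
  have hyx : (y₀ + ∫ t in x₀..x, g t) = ytil x := (hkey x hx).symm
  have hxIcc : x ∈ Icc (x₀ - r) (x₀ + r) := ⟨by linarith [hx.1], by linarith [hx.2, hαr]⟩
  refine ⟨?_, ?_⟩
  · show (y₀ + ∫ t in x₀..x, g t) ∈ G
    rw [hyx]
    exact hrGG (closedBall_subset_closedBall (min_le_right rI rG) (hytil_ball x))
  · show HasDerivWithinAt (fun u => y₀ + ∫ t in x₀..u, g t)
      (f x (y₀ + ∫ t in x₀..x, g t)) (Icc x₀ (x₀ + α)) x
    have hD : HasDerivAt (fun u => ∫ t in x₀..u, g t) (g x) x :=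
      intervalIntegral.integral_hasDerivAt_right (hgcont.intervalIntegrable _ _)
        hgcont.stronglyMeasurable.stronglyMeasurableAtFilter hgcont.continuousAt
    have hD2 := ((hD.const_add y₀).hasDerivWithinAt (s := Icc x₀ (x₀ + α)))
    have : f x ((y₀ + ∫ t in x₀..x, g t)) = g x := by
      rw [hyx, hgdef]
      exact (hFeq x hxIcc (ytil x) (hytil_ball x)).symm
    rw [this]
    exact hD2
end

section
/- Let φ : ℝ → ℝ be continuous and bounded and define u(t,x) = (4πt)^{−1/2} ∫_ℝ φ(ξ) exp(−(x−ξ)²/(4t)) dξ for t > 0. Then u satisfies ∂_t u(t,x) = ∂²_x u(t,x) for all t > 0, x ∈ ℝ, and lim_{t→0⁺} u(t,x) = φ(x) for every x ∈ ℝ. -/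
open MeasureTheory Real Filter Metric

lemma hp_sq_integrable {b : ℝ} (hb : 0 < b) :
    Integrable (fun y : ℝ => y ^ 2 * Real.exp (-b * y ^ 2)) := by
  have h := integrable_rpow_mul_exp_neg_mul_sq hb (s := 2) (by norm_num)
  have : ∀ y : ℝ, y ^ (2:ℝ) = y ^ 2 := fun y => by
    rw [show (2:ℝ) = ((2:ℕ):ℝ) by norm_num, Real.rpow_natCast]
  simpa [this] using h

lemma hp_master_integrable {b : ℝ} (hb : 0 < b) (a0 a2 x : ℝ) :
    Integrable (fun ξ : ℝ => (a0 + a2 * (x - ξ) ^ 2) * Real.exp (-b * (x - ξ) ^ 2)) := by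
  have hG : Integrable (fun y : ℝ => (a0 + a2 * y ^ 2) * Real.exp (-b * y ^ 2)) := by
    have h1 := (integrable_exp_neg_mul_sq hb).const_mul a0
    have h2 := (hp_sq_integrable hb).const_mul a2
    have h3 := h1.add h2
    refine h3.congr ?_
    filter_upwards with y
    simp only [Pi.add_apply]; ring
  exact (MeasureTheory.integrable_comp_sub_left
    (fun y : ℝ => (a0 + a2 * y ^ 2) * Real.exp (-b * y ^ 2)) x).2 hG

lemma hp_exp_shift {t x₀ y ξ : ℝ} (ht : 0 < t) (hy : |y - x₀| < 1) :
    Real.exp (-(y - ξ) ^ 2 / (4 * t)) ≤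
      Real.exp (1 / (4 * t)) * Real.exp (-(x₀ - ξ) ^ 2 / (8 * t)) := by
  rw [← Real.exp_add, Real.exp_le_exp]
  have hy2 : (y - x₀) ^ 2 ≤ 1 := by nlinarith [sq_abs (y - x₀), abs_nonneg (y - x₀)]
  have h2 : -2 * (y - ξ) ^ 2 ≤ 2 - (x₀ - ξ) ^ 2 := by
    nlinarith [sq_nonneg ((y - ξ) + (y - x₀))]
  calc -(y - ξ) ^ 2 / (4 * t) = (-2 * (y - ξ) ^ 2) / (8 * t) := by ring
    _ ≤ (2 - (x₀ - ξ) ^ 2) / (8 * t) := by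
        apply div_le_div_of_nonneg_right h2 (by positivity) |>.trans_eq rfl
    _ = 1 / (4 * t) + -(x₀ - ξ) ^ 2 / (8 * t) := by ring

lemma hp_exp_shift_t {t₀ s : ℝ} (ht : 0 < t₀) (hs : |s - t₀| < t₀ / 2) (z : ℝ) :
    Real.exp (-z ^ 2 / (4 * s)) ≤ Real.exp (-z ^ 2 / (6 * t₀)) := by
  rw [Real.exp_le_exp]
  obtain ⟨h1, h2⟩ := abs_lt.mp hs
  have hs0 : 0 < s := by linarith
  rw [neg_div, neg_div, neg_le_neg_iff]
  exact div_le_div_of_nonneg_left (sq_nonneg z) (by linarith) (by linarith)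

-- pointwise derivative in space of the kernel factor
lemma hp_dx (t ξ y : ℝ) :
    HasDerivAt (fun y' : ℝ => Real.exp (-(y' - ξ) ^ 2 / (4 * t)))
      (-(y - ξ) / (2 * t) * Real.exp (-(y - ξ) ^ 2 / (4 * t))) y := by
  have h0 : HasDerivAt (fun y' : ℝ => y' - ξ) 1 y := (hasDerivAt_id y).sub_const ξ
  have h1 : HasDerivAt (fun y' : ℝ => (y' - ξ) ^ 2) (2 * (y - ξ)) y := by
    simpa using h0.fun_pow 2
  have h2 : HasDerivAt (fun y' : ℝ => -(y' - ξ) ^ 2 / (4 * t))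
      (-(2 * (y - ξ)) / (4 * t)) y := h1.neg.div_const (4 * t)
  have h3 := h2.exp
  convert h3 using 1
  ring

-- pointwise derivative in time of the kernel factor
lemma hp_dt (x ξ : ℝ) {s : ℝ} (hs : s ≠ 0) :
    HasDerivAt (fun s' : ℝ => Real.exp (-(x - ξ) ^ 2 / (4 * s')))
      ((x - ξ) ^ 2 / (4 * s ^ 2) * Real.exp (-(x - ξ) ^ 2 / (4 * s))) s := by
  have h0 : HasDerivAt (fun s' : ℝ => s'⁻¹) (-(s ^ 2)⁻¹) s := hasDerivAt_inv hs
  have h1 : HasDerivAt (fun s' : ℝ => -(x - ξ) ^ 2 / 4 * s'⁻¹)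
      (-(x - ξ) ^ 2 / 4 * -(s ^ 2)⁻¹) s := h0.const_mul _
  have h2 : (fun s' : ℝ => -(x - ξ) ^ 2 / 4 * s'⁻¹)
      = fun s' : ℝ => -(x - ξ) ^ 2 / (4 * s') := by
    funext s'; ring
  rw [h2] at h1
  have h3 := h1.exp
  convert h3 using 1
  ring

lemma hp_cont {φ : ℝ → ℝ} (hφc : Continuous φ) (t y : ℝ) :
    Continuous (fun ξ : ℝ => φ ξ * Real.exp (-(y - ξ) ^ 2 / (4 * t))) := by
  exact hφc.mul (Real.continuous_exp.comp (by fun_prop))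

lemma hp_abs_le (z : ℝ) : |z| ≤ 1 + z ^ 2 := by
  nlinarith [sq_abs z, sq_nonneg (|z| - 1), abs_nonneg z]

lemma hp_J1 {φ : ℝ → ℝ} (hφc : Continuous φ) {C : ℝ} (hC : ∀ z, |φ z| ≤ C)
    {t : ℝ} (ht : 0 < t) (x₀ : ℝ) :
    Integrable (fun ξ : ℝ => φ ξ * (-(x₀ - ξ) / (2 * t)) * Real.exp (-(x₀ - ξ) ^ 2 / (4 * t))) ∧
    HasDerivAt (fun y => ∫ ξ : ℝ, φ ξ * Real.exp (-(y - ξ) ^ 2 / (4 * t)))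
      (∫ ξ : ℝ, φ ξ * (-(x₀ - ξ) / (2 * t)) * Real.exp (-(x₀ - ξ) ^ 2 / (4 * t))) x₀ := by
  have hC0 : 0 ≤ C := le_trans (abs_nonneg _) (hC 0)
  set K : ℝ := C * Real.exp (1 / (4 * t)) / (2 * t) with hK
  have hK0 : 0 ≤ K := by positivity
  have main := hasDerivAt_integral_of_dominated_loc_of_deriv_le
    (F := fun y (ξ : ℝ) => φ ξ * Real.exp (-(y - ξ) ^ 2 / (4 * t)))
    (F' := fun y (ξ : ℝ) => φ ξ * (-(y - ξ) / (2 * t)) * Real.exp (-(y - ξ) ^ 2 / (4 * t)))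
    (x₀ := x₀) (s := Metric.ball x₀ 1) (μ := volume)
    (bound := fun ξ : ℝ => (2 * K + K * (x₀ - ξ) ^ 2) * Real.exp (-(8 * t)⁻¹ * (x₀ - ξ) ^ 2))
    (Metric.ball_mem_nhds x₀ one_pos) ?_ ?_ ?_ ?_ ?_ ?_
  · exact main
  · exact Eventually.of_forall fun y => (hp_cont hφc t y).aestronglyMeasurable
  · -- integrability of F x₀
    refine (hp_master_integrable (b := (4 * t)⁻¹) (by positivity) C 0 x₀).mono'
      (hp_cont hφc t x₀).aestronglyMeasurable ?_
    filter_upwards with ξ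
    rw [Real.norm_eq_abs, abs_mul, Real.abs_exp]
    have : -(x₀ - ξ) ^ 2 / (4 * t) = -(4 * t)⁻¹ * (x₀ - ξ) ^ 2 := by ring
    rw [this]
    have h := hC ξ
    nlinarith [Real.exp_pos (-(4 * t)⁻¹ * (x₀ - ξ) ^ 2), abs_nonneg (φ ξ)]
  · -- measurability of F' x₀
    exact ((hφc.mul (by fun_prop)).mul (Real.continuous_exp.comp (by fun_prop))).aestronglyMeasurable
  · -- bound
    filter_upwards with ξ y hy
    rw [Real.norm_eq_abs, abs_mul, abs_mul, Real.abs_exp, abs_div, abs_neg,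
      abs_of_pos (by positivity : (0:ℝ) < 2 * t)]
    have h1 : |y - ξ| ≤ |x₀ - ξ| + 1 := by
      have := abs_sub_abs_le_abs_sub (y - ξ) (x₀ - ξ)
      have h2 : |y - ξ - (x₀ - ξ)| = |y - x₀| := by ring_nf
      rw [mem_ball, Real.dist_eq] at hy
      calc |y - ξ| ≤ |x₀ - ξ| + |y - ξ - (x₀ - ξ)| := by
            have := abs_sub_abs_le_abs_sub (y - ξ) (x₀ - ξ); linarith [abs_sub (y-ξ) (x₀-ξ)]
        _ ≤ |x₀ - ξ| + 1 := by rw [h2]; linarith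
    have hexp := hp_exp_shift ht (by rw [mem_ball, Real.dist_eq] at hy; exact hy) (ξ := ξ)
    calc |φ ξ| * (|y - ξ| / (2 * t)) * Real.exp (-(y - ξ) ^ 2 / (4 * t))
        ≤ C * ((|x₀ - ξ| + 1) / (2 * t)) *
          (Real.exp (1 / (4 * t)) * Real.exp (-(x₀ - ξ) ^ 2 / (8 * t))) := by
          gcongr
          exact hC ξ
      _ ≤ (2 * K + K * (x₀ - ξ) ^ 2) * Real.exp (-(8 * t)⁻¹ * (x₀ - ξ) ^ 2) := by
          have harg : -(x₀ - ξ) ^ 2 / (8 * t) = -(8 * t)⁻¹ * (x₀ - ξ) ^ 2 := by ring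
          rw [← harg]
          have habs := hp_abs_le (x₀ - ξ)
          have hE := Real.exp_pos (-(x₀ - ξ) ^ 2 / (8 * t))
          have key : C * ((|x₀ - ξ| + 1) / (2 * t)) * Real.exp (1 / (4 * t))
              ≤ 2 * K + K * (x₀ - ξ) ^ 2 := by
            have e1 : C * ((|x₀ - ξ| + 1) / (2 * t)) * Real.exp (1 / (4 * t))
                = (C * Real.exp (1 / (4 * t)) / (2 * t)) * (|x₀ - ξ| + 1) := by ring
            have e2 : 2 * K + K * (x₀ - ξ) ^ 2
                = (C * Real.exp (1 / (4 * t)) / (2 * t)) * (2 + (x₀ - ξ) ^ 2) := by rw [hK]; ring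
            rw [e1, e2]
            have h2 : |x₀ - ξ| + 1 ≤ 2 + (x₀ - ξ) ^ 2 := by linarith
            exact mul_le_mul_of_nonneg_left h2 (by positivity)
          nlinarith [mul_le_mul_of_nonneg_right key hE.le]
  · exact hp_master_integrable (by positivity) (2 * K) K x₀
  · filter_upwards with ξ y _
    have := ((hp_dx t ξ y).const_mul (φ ξ))
    convert this using 1
    all_goals first | rfl | ring

lemma hp_int0 {φ : ℝ → ℝ} (hφc : Continuous φ) {C : ℝ} (hC : ∀ z, |φ z| ≤ C)
    {t : ℝ} (ht : 0 < t) (x₀ : ℝ) :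
    Integrable (fun ξ : ℝ => φ ξ * Real.exp (-(x₀ - ξ) ^ 2 / (4 * t))) := by
  refine (hp_master_integrable (b := (4 * t)⁻¹) (by positivity) C 0 x₀).mono'
    (hp_cont hφc t x₀).aestronglyMeasurable ?_
  filter_upwards with ξ
  rw [Real.norm_eq_abs, abs_mul, Real.abs_exp]
  have : -(x₀ - ξ) ^ 2 / (4 * t) = -(4 * t)⁻¹ * (x₀ - ξ) ^ 2 := by ring
  rw [this]
  have h := hC ξ
  nlinarith [Real.exp_pos (-(4 * t)⁻¹ * (x₀ - ξ) ^ 2), abs_nonneg (φ ξ)]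

lemma hp_J2 {φ : ℝ → ℝ} (hφc : Continuous φ) {C : ℝ} (hC : ∀ z, |φ z| ≤ C)
    {t : ℝ} (ht : 0 < t) (x₀ : ℝ) :
    Integrable (fun ξ : ℝ =>
      φ ξ * ((x₀ - ξ) ^ 2 / (4 * t ^ 2) - 1 / (2 * t)) * Real.exp (-(x₀ - ξ) ^ 2 / (4 * t))) ∧
    HasDerivAt (fun y => ∫ ξ : ℝ, φ ξ * (-(y - ξ) / (2 * t)) * Real.exp (-(y - ξ) ^ 2 / (4 * t)))
      (∫ ξ : ℝ, φ ξ * ((x₀ - ξ) ^ 2 / (4 * t ^ 2) - 1 / (2 * t)) *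
        Real.exp (-(x₀ - ξ) ^ 2 / (4 * t))) x₀ := by
  have hC0 : 0 ≤ C := le_trans (abs_nonneg _) (hC 0)
  set E1 : ℝ := Real.exp (1 / (4 * t)) with hE1
  have hE1pos : 0 < E1 := Real.exp_pos _
  set a2 : ℝ := 3 * C * E1 / (4 * t ^ 2) with ha2
  set a0 : ℝ := C * E1 * (3 / (4 * t ^ 2) + 1 / (2 * t)) with ha0
  have main := hasDerivAt_integral_of_dominated_loc_of_deriv_le
    (F := fun y (ξ : ℝ) => φ ξ * (-(y - ξ) / (2 * t)) * Real.exp (-(y - ξ) ^ 2 / (4 * t)))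
    (F' := fun y (ξ : ℝ) => φ ξ * ((y - ξ) ^ 2 / (4 * t ^ 2) - 1 / (2 * t)) *
      Real.exp (-(y - ξ) ^ 2 / (4 * t)))
    (x₀ := x₀) (s := Metric.ball x₀ 1) (μ := volume)
    (bound := fun ξ : ℝ => (a0 + a2 * (x₀ - ξ) ^ 2) * Real.exp (-(8 * t)⁻¹ * (x₀ - ξ) ^ 2))
    (Metric.ball_mem_nhds x₀ one_pos) ?_ ?_ ?_ ?_ ?_ ?_
  · exact main
  · refine Eventually.of_forall fun y => Continuous.aestronglyMeasurable ?_
    exact (hφc.mul (by fun_prop)).mul (Real.continuous_exp.comp (by fun_prop))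
  · exact (hp_J1 hφc hC ht x₀).1
  · exact ((hφc.mul (by fun_prop)).mul (Real.continuous_exp.comp (by fun_prop))).aestronglyMeasurable
  · filter_upwards with ξ y hy
    rw [mem_ball, Real.dist_eq] at hy
    rw [Real.norm_eq_abs, abs_mul, abs_mul, Real.abs_exp]
    have h1 : |y - ξ| ≤ |x₀ - ξ| + 1 := by
      have h2 : |y - ξ - (x₀ - ξ)| = |y - x₀| := by ring_nf
      calc |y - ξ| ≤ |x₀ - ξ| + |y - ξ - (x₀ - ξ)| := by
            linarith [abs_sub_abs_le_abs_sub (y - ξ) (x₀ - ξ), abs_sub (y - ξ) (x₀ - ξ)]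
        _ ≤ |x₀ - ξ| + 1 := by rw [h2]; linarith
    have hsq : (y - ξ) ^ 2 ≤ 3 * (x₀ - ξ) ^ 2 + 3 := by
      nlinarith [sq_abs (y - ξ), sq_abs (x₀ - ξ), hp_abs_le (x₀ - ξ), abs_nonneg (y - ξ),
        abs_nonneg (x₀ - ξ)]
    have habs2 : |(y - ξ) ^ 2 / (4 * t ^ 2) - 1 / (2 * t)|
        ≤ (3 * (x₀ - ξ) ^ 2 + 3) / (4 * t ^ 2) + 1 / (2 * t) := by
      have h3 : |(y - ξ) ^ 2 / (4 * t ^ 2) - 1 / (2 * t)|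
          ≤ |(y - ξ) ^ 2 / (4 * t ^ 2)| + |1 / (2 * t)| := abs_sub _ _
      rw [abs_of_nonneg (show (0:ℝ) ≤ (y - ξ) ^ 2 / (4 * t ^ 2) by positivity),
        abs_of_nonneg (show (0:ℝ) ≤ 1 / (2 * t) by positivity)] at h3
      have h4 : (y - ξ) ^ 2 / (4 * t ^ 2) ≤ (3 * (x₀ - ξ) ^ 2 + 3) / (4 * t ^ 2) := by
        gcongr
      linarith
    have hexp := hp_exp_shift ht hy (ξ := ξ)
    calc |φ ξ| * |(y - ξ) ^ 2 / (4 * t ^ 2) - 1 / (2 * t)| * Real.exp (-(y - ξ) ^ 2 / (4 * t))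
        ≤ C * ((3 * (x₀ - ξ) ^ 2 + 3) / (4 * t ^ 2) + 1 / (2 * t)) *
          (E1 * Real.exp (-(x₀ - ξ) ^ 2 / (8 * t))) := by
          gcongr
          all_goals first | exact hC ξ | exact habs2 | exact hexp | assumption
      _ = (a0 + a2 * (x₀ - ξ) ^ 2) * Real.exp (-(8 * t)⁻¹ * (x₀ - ξ) ^ 2) := by
          have harg : -(x₀ - ξ) ^ 2 / (8 * t) = -(8 * t)⁻¹ * (x₀ - ξ) ^ 2 := by ring
          rw [← harg, ha0, ha2]
          ring
  · exact hp_master_integrable (by positivity) a0 a2 x₀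
  · filter_upwards with ξ y _
    have hlin : HasDerivAt (fun y' : ℝ => φ ξ * (-(y' - ξ) / (2 * t))) (φ ξ * (-1 / (2 * t))) y := by
      have h := (((hasDerivAt_id y).sub_const ξ).neg.div_const (2 * t)).const_mul (φ ξ)
      convert h using 1 <;> first | rfl | ring
    have := hlin.mul (hp_dx t ξ y)
    convert this using 1
    all_goals first | rfl | ring

lemma hp_Jt {φ : ℝ → ℝ} (hφc : Continuous φ) {C : ℝ} (hC : ∀ z, |φ z| ≤ C)
    {t : ℝ} (ht : 0 < t) (x : ℝ) :
    Integrable (fun ξ : ℝ =>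
      φ ξ * ((x - ξ) ^ 2 / (4 * t ^ 2)) * Real.exp (-(x - ξ) ^ 2 / (4 * t))) ∧
    HasDerivAt (fun s => ∫ ξ : ℝ, φ ξ * Real.exp (-(x - ξ) ^ 2 / (4 * s)))
      (∫ ξ : ℝ, φ ξ * ((x - ξ) ^ 2 / (4 * t ^ 2)) * Real.exp (-(x - ξ) ^ 2 / (4 * t))) t := by
  have hC0 : 0 ≤ C := le_trans (abs_nonneg _) (hC 0)
  have main := hasDerivAt_integral_of_dominated_loc_of_deriv_le
    (F := fun s (ξ : ℝ) => φ ξ * Real.exp (-(x - ξ) ^ 2 / (4 * s)))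
    (F' := fun s (ξ : ℝ) => φ ξ * ((x - ξ) ^ 2 / (4 * s ^ 2)) * Real.exp (-(x - ξ) ^ 2 / (4 * s)))
    (x₀ := t) (s := Metric.ball t (t / 2)) (μ := volume)
    (bound := fun ξ : ℝ => (0 + C / t ^ 2 * (x - ξ) ^ 2) * Real.exp (-(6 * t)⁻¹ * (x - ξ) ^ 2))
    (Metric.ball_mem_nhds t (by positivity)) ?_ ?_ ?_ ?_ ?_ ?_
  · exact main
  · refine Eventually.of_forall fun s => Continuous.aestronglyMeasurable ?_
    exact hφc.mul (Real.continuous_exp.comp (by fun_prop))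
  · exact hp_int0 hφc hC ht x
  · exact ((hφc.mul (by fun_prop)).mul (Real.continuous_exp.comp (by fun_prop))).aestronglyMeasurable
  · filter_upwards with ξ s hs
    rw [mem_ball, Real.dist_eq] at hs
    obtain ⟨hs1, hs2⟩ := abs_lt.mp hs
    have hs0 : 0 < s := by linarith
    rw [Real.norm_eq_abs, abs_mul, abs_mul, Real.abs_exp,
      abs_of_nonneg (by positivity : (0:ℝ) ≤ (x - ξ) ^ 2 / (4 * s ^ 2))]
    have hexp := hp_exp_shift_t ht hs (x - ξ)
    calc |φ ξ| * ((x - ξ) ^ 2 / (4 * s ^ 2)) * Real.exp (-(x - ξ) ^ 2 / (4 * s))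
        ≤ C * ((x - ξ) ^ 2 / t ^ 2) * Real.exp (-(x - ξ) ^ 2 / (6 * t)) := by
          gcongr
          all_goals first | exact hC ξ | nlinarith | assumption
      _ = (0 + C / t ^ 2 * (x - ξ) ^ 2) * Real.exp (-(6 * t)⁻¹ * (x - ξ) ^ 2) := by
          have harg : -(x - ξ) ^ 2 / (6 * t) = -(6 * t)⁻¹ * (x - ξ) ^ 2 := by ring
          rw [← harg]
          ring
  · exact hp_master_integrable (by positivity) 0 (C / t ^ 2) x
  · filter_upwards with ξ s hs
    rw [mem_ball, Real.dist_eq] at hs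
    obtain ⟨hs1, hs2⟩ := abs_lt.mp hs
    have hs0 : s ≠ 0 := (show (0:ℝ) < s by linarith).ne'
    have := (hp_dt x ξ hs0).const_mul (φ ξ)
    convert this using 1
    all_goals first | rfl | ring

lemma hp_sqrt4pit (t : ℝ) :
    Real.sqrt (4 * Real.pi * t) = 2 * Real.sqrt Real.pi * Real.sqrt t := by
  rw [Real.sqrt_mul (by positivity) t, Real.sqrt_mul (by norm_num) Real.pi,
    show Real.sqrt 4 = 2 by rw [show (4:ℝ) = 2 ^ 2 by norm_num, Real.sqrt_sq (by norm_num)]]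

lemma hp_a_deriv {t : ℝ} (ht : 0 < t) :
    HasDerivAt (fun s : ℝ => (Real.sqrt (4 * Real.pi * s))⁻¹)
      (-(1 / (2 * t)) * (Real.sqrt (4 * Real.pi * t))⁻¹) t := by
  have hst : (0:ℝ) < Real.sqrt t := Real.sqrt_pos.mpr ht
  have hs : HasDerivAt Real.sqrt (1 / (2 * Real.sqrt t)) t := Real.hasDerivAt_sqrt ht.ne'
  have hinv : HasDerivAt (fun s : ℝ => (Real.sqrt s)⁻¹)
      (-(1 / (2 * Real.sqrt t)) / (Real.sqrt t) ^ 2) t := hs.inv hst.ne'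
  have h2 : HasDerivAt (fun s : ℝ => (2 * Real.sqrt Real.pi)⁻¹ * (Real.sqrt s)⁻¹)
      ((2 * Real.sqrt Real.pi)⁻¹ * (-(1 / (2 * Real.sqrt t)) / (Real.sqrt t) ^ 2)) t :=
    hinv.const_mul _
  have hfun : (fun s : ℝ => (2 * Real.sqrt Real.pi)⁻¹ * (Real.sqrt s)⁻¹)
      = fun s : ℝ => (Real.sqrt (4 * Real.pi * s))⁻¹ := by
    funext s
    rw [hp_sqrt4pit, mul_inv, mul_inv]
    ring
  rw [hfun] at h2
  convert h2 using 1
  rw [hp_sqrt4pit]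
  have h3 : Real.sqrt t ^ 2 = t := Real.sq_sqrt ht.le
  have hpi : (0:ℝ) < Real.sqrt Real.pi := Real.sqrt_pos.mpr Real.pi_pos
  field_simp
  nlinarith [hst, hpi]

lemma hp_change {φ : ℝ → ℝ} {t : ℝ} (ht : 0 < t) (x : ℝ) :
    (∫ ξ : ℝ, φ ξ * Real.exp (-(x - ξ) ^ 2 / (4 * t)))
      = (2 * Real.sqrt t) * ∫ y : ℝ, φ (x - 2 * Real.sqrt t * y) * Real.exp (-y ^ 2) := by
  have hst : (0:ℝ) < Real.sqrt t := Real.sqrt_pos.mpr ht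
  have h1 : (∫ ξ : ℝ, φ ξ * Real.exp (-(x - ξ) ^ 2 / (4 * t)))
      = ∫ ξ : ℝ, φ (x - ξ) * Real.exp (-ξ ^ 2 / (4 * t)) := by
    rw [← MeasureTheory.integral_sub_left_eq_self
      (fun ξ => φ ξ * Real.exp (-(x - ξ) ^ 2 / (4 * t))) volume x]
    congr 1
    funext ξ
    simp only [sub_sub_cancel]
  rw [h1]
  have h2 := MeasureTheory.Measure.integral_comp_mul_left
    (fun ξ : ℝ => φ (x - ξ) * Real.exp (-ξ ^ 2 / (4 * t))) (2 * Real.sqrt t)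
  have h3 : ∀ y : ℝ, φ (x - 2 * Real.sqrt t * y) * Real.exp (-(2 * Real.sqrt t * y) ^ 2 / (4 * t))
      = φ (x - 2 * Real.sqrt t * y) * Real.exp (-y ^ 2) := by
    intro y
    congr 2
    have : Real.sqrt t ^ 2 = t := Real.sq_sqrt ht.le
    field_simp
    ring_nf
    nlinarith [this]
  have h4 : (∫ y : ℝ, φ (x - 2 * Real.sqrt t * y) * Real.exp (-y ^ 2))
      = ∫ y : ℝ, φ (x - 2 * Real.sqrt t * y) *
          Real.exp (-(2 * Real.sqrt t * y) ^ 2 / (4 * t)) := by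
    congr 1
    funext y
    exact (h3 y).symm
  rw [h4]
  have h5 : (∫ y : ℝ, φ (x - 2 * Real.sqrt t * y) *
      Real.exp (-(2 * Real.sqrt t * y) ^ 2 / (4 * t)))
      = |(2 * Real.sqrt t)⁻¹| • ∫ ξ : ℝ, φ (x - ξ) * Real.exp (-ξ ^ 2 / (4 * t)) := h2
  rw [h5, smul_eq_mul, abs_of_pos (by positivity : (0:ℝ) < (2 * Real.sqrt t)⁻¹)]
  field_simp

lemma hp_limit {φ : ℝ → ℝ} (hφc : Continuous φ) {C : ℝ} (hC : ∀ z, |φ z| ≤ C) (x : ℝ) :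
    Tendsto (fun t => (Real.sqrt Real.pi)⁻¹ *
        ∫ y : ℝ, φ (x - 2 * Real.sqrt t * y) * Real.exp (-y ^ 2))
      (nhdsWithin 0 (Set.Ioi 0)) (nhds (φ x)) := by
  have hC0 : 0 ≤ C := le_trans (abs_nonneg _) (hC 0)
  have hπ : (0:ℝ) < Real.sqrt Real.pi := Real.sqrt_pos.mpr Real.pi_pos
  have hgauss : (∫ y : ℝ, Real.exp (-y ^ 2)) = Real.sqrt Real.pi := by
    have := integral_gaussian 1
    simpa using this
  have hint : Tendsto (fun t => ∫ y : ℝ, φ (x - 2 * Real.sqrt t * y) * Real.exp (-y ^ 2))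
      (nhdsWithin 0 (Set.Ioi 0)) (nhds (∫ y : ℝ, φ x * Real.exp (-y ^ 2))) := by
    apply tendsto_integral_filter_of_dominated_convergence (fun y => C * Real.exp (-y ^ 2))
    · refine Eventually.of_forall fun t => Continuous.aestronglyMeasurable ?_
      exact (hφc.comp (by fun_prop)).mul (by fun_prop)
    · refine Eventually.of_forall fun t => Eventually.of_forall fun y => ?_
      rw [Real.norm_eq_abs, abs_mul, Real.abs_exp]
      exact mul_le_mul_of_nonneg_right (hC _) (Real.exp_pos _).le
    · have h := (integrable_exp_neg_mul_sq one_pos).const_mul C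
      simpa using h
    · refine Eventually.of_forall fun y => ?_
      have hsqrt : Tendsto (fun t : ℝ => Real.sqrt t) (nhdsWithin 0 (Set.Ioi 0)) (nhds 0) := by
        have := (Real.continuous_sqrt.tendsto 0).mono_left
          (nhdsWithin_le_nhds (s := Set.Ioi (0:ℝ)))
        simpa using this
      have harg : Tendsto (fun t : ℝ => x - 2 * Real.sqrt t * y)
          (nhdsWithin 0 (Set.Ioi 0)) (nhds x) := by
        have h1 : Tendsto (fun t : ℝ => 2 * Real.sqrt t * y)
            (nhdsWithin 0 (Set.Ioi 0)) (nhds 0) := by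
          have := (hsqrt.const_mul 2).mul_const y
          simpa using this
        have := tendsto_const_nhds (x := x) (f := nhdsWithin (0:ℝ) (Set.Ioi 0)) |>.sub h1
        simpa using this
      exact ((hφc.tendsto x).comp harg).mul_const _
  have hfinal := hint.const_mul (Real.sqrt Real.pi)⁻¹
  rw [integral_const_mul, hgauss] at hfinal
  have : (Real.sqrt Real.pi)⁻¹ * (φ x * Real.sqrt Real.pi) = φ x := by
    field_simp
  rwa [this] at hfinal

/-- Poisson's formula for the Cauchy problem of the one-dimensional heat
equation: convolution with the heat kernel solves `∂_t u = ∂²_x u` and attains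
the bounded continuous initial datum pointwise. -/
theorem heat_equation_poisson_formula (φ : ℝ → ℝ)
    (hφc : Continuous φ) (hφb : ∃ C : ℝ, ∀ x : ℝ, |φ x| ≤ C)
    (u : ℝ → ℝ → ℝ)
    (hu : ∀ t x : ℝ, 0 < t → u t x =
      (Real.sqrt (4 * Real.pi * t))⁻¹ * ∫ ξ : ℝ, φ ξ * Real.exp (-(x - ξ) ^ 2 / (4 * t))) :
    (∀ t x : ℝ, 0 < t →
      deriv (fun s => u s x) t = deriv (fun y => deriv (fun y' => u t y') y) x) ∧
    ∀ x : ℝ, Filter.Tendsto (fun t => u t x) (nhdsWithin 0 (Set.Ioi 0)) (nhds (φ x)) := by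
  obtain ⟨C, hC⟩ := hφb
  constructor
  · intro t x ht
    have ht2 : (0:ℝ) < 2 * t := by positivity
    -- left-hand side
    have hA := hp_a_deriv ht
    have hJt := (hp_Jt hφc hC ht x).2
    have hprod := hA.mul hJt
    have hueq : (fun s => u s x) =ᶠ[nhds t] fun s =>
        (Real.sqrt (4 * Real.pi * s))⁻¹ * ∫ ξ : ℝ, φ ξ * Real.exp (-(x - ξ) ^ 2 / (4 * s)) := by
      filter_upwards [isOpen_Ioi.mem_nhds ht] with s hs
      exact hu s x hs
    have hL := (hprod.congr_of_eventuallyEq hueq).deriv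
    -- right-hand side
    have h1 : ∀ y : ℝ, deriv (fun y' => u t y') y = (Real.sqrt (4 * Real.pi * t))⁻¹ *
        ∫ ξ : ℝ, φ ξ * (-(y - ξ) / (2 * t)) * Real.exp (-(y - ξ) ^ 2 / (4 * t)) := by
      intro y
      have hfun : (fun y' => u t y') = fun y' => (Real.sqrt (4 * Real.pi * t))⁻¹ *
          ∫ ξ : ℝ, φ ξ * Real.exp (-(y' - ξ) ^ 2 / (4 * t)) := funext fun y' => hu t y' ht
      rw [hfun]
      exact (((hp_J1 hφc hC ht y).2).const_mul _).deriv
    have h2 : (fun y => deriv (fun y' => u t y') y) = fun y =>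
        (Real.sqrt (4 * Real.pi * t))⁻¹ *
          ∫ ξ : ℝ, φ ξ * (-(y - ξ) / (2 * t)) * Real.exp (-(y - ξ) ^ 2 / (4 * t)) :=
      funext h1
    have hR := (((hp_J2 hφc hC ht x).2).const_mul ((Real.sqrt (4 * Real.pi * t))⁻¹)).deriv
    rw [hL, h2, hR]
    -- split the time-derivative integral
    have hsplit : (∫ ξ : ℝ, φ ξ * ((x - ξ) ^ 2 / (4 * t ^ 2)) *
        Real.exp (-(x - ξ) ^ 2 / (4 * t)))
        = (∫ ξ : ℝ, φ ξ * ((x - ξ) ^ 2 / (4 * t ^ 2) - 1 / (2 * t)) *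
            Real.exp (-(x - ξ) ^ 2 / (4 * t)))
          + (1 / (2 * t)) * ∫ ξ : ℝ, φ ξ * Real.exp (-(x - ξ) ^ 2 / (4 * t)) := by
      have e1 : (fun ξ : ℝ => φ ξ * ((x - ξ) ^ 2 / (4 * t ^ 2)) *
          Real.exp (-(x - ξ) ^ 2 / (4 * t)))
          = fun ξ : ℝ => φ ξ * ((x - ξ) ^ 2 / (4 * t ^ 2) - 1 / (2 * t)) *
              Real.exp (-(x - ξ) ^ 2 / (4 * t))
            + (1 / (2 * t)) * (φ ξ * Real.exp (-(x - ξ) ^ 2 / (4 * t))) := by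
        funext ξ; ring
      rw [e1, integral_add ((hp_J2 hφc hC ht x).1) (((hp_int0 hφc hC ht x)).const_mul _),
        integral_const_mul]
    rw [hsplit]
    ring
  · intro x
    refine Tendsto.congr' ?_ (hp_limit hφc hC x)
    filter_upwards [self_mem_nhdsWithin] with t htpos
    have ht : (0:ℝ) < t := htpos
    have hst : (0:ℝ) < Real.sqrt t := Real.sqrt_pos.mpr ht
    have hπ : (0:ℝ) < Real.sqrt Real.pi := Real.sqrt_pos.mpr Real.pi_pos
    rw [hu t x ht, hp_change ht x, hp_sqrt4pit]
    field_simp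
end
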